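/- arXiv:2305.17899 — 5 statements merged into one kernel-verified Lean document; each statement's English description precedes it below -/
import Mathlib

section
/- For any α, β, F ∈ ℂ, the assignments L_m · G_n = −(α+n+mβ)G_{m+n}, J_m · G_n = F G_{m+n}, and C₁ · G_n = C₂ · G_n = C₃ · G_n = 0 (for all m, n ∈ ℤ) define a Lie module structure over the twisted Heisenberg–Virasoro algebra 𝓛 on the complex vector space V_{α,β,F} with basis {G_n : n ∈ ℤ}; that is, [x, y] · v = x · (y · v) − y · (x · v) for all x, y ∈ 𝓛 and v ∈ V_{α,β,F}. -/
noncomputable section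

/-- The combined family consisting of the vectors `L m`, `J m` (`m : ℤ`) and
`C₁`, `C₂`, `C₃` in a candidate twisted Heisenberg–Virasoro algebra. -/
def thvFam {𝓛 : Type*} (Lg Jg : ℤ → 𝓛) (C1 C2 C3 : 𝓛) :
    (Fin 2 × ℤ) ⊕ Fin 3 → 𝓛 :=
  Sum.elim (fun p => ![Lg, Jg] p.1 p.2) ![C1, C2, C3]

/-- A complex Lie algebra `𝓛`, equipped with distinguished elements `Lg m`, `Jg m`
(`m : ℤ`) and `C1`, `C2`, `C3`, is a realization of the twisted Heisenberg–Virasoro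
algebra if these elements form a basis, `C1`, `C2`, `C3` are central, and the defining
bracket relations hold. -/
structure IsTwistedHV {𝓛 : Type*} [LieRing 𝓛] [LieAlgebra ℂ 𝓛]
    (Lg Jg : ℤ → 𝓛) (C1 C2 C3 : 𝓛) : Prop where
  lie_LL : ∀ m n : ℤ, ⁅Lg m, Lg n⁆ =
      ((m : ℂ) - (n : ℂ)) • Lg (m + n) +
        (if m + n = 0 then (((m : ℂ) ^ 3 - (m : ℂ)) / 12) • C1 else 0)
  lie_LJ : ∀ m n : ℤ, ⁅Lg m, Jg n⁆ =
      (-(n : ℂ)) • Jg (m + n) -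
        (if m + n = 0 then ((m : ℂ) ^ 2 + (m : ℂ)) • C2 else 0)
  lie_JJ : ∀ m n : ℤ, ⁅Jg m, Jg n⁆ = (if m + n = 0 then (m : ℂ) • C3 else 0)
  central_C1 : ∀ x : 𝓛, ⁅C1, x⁆ = 0
  central_C2 : ∀ x : 𝓛, ⁅C2, x⁆ = 0
  central_C3 : ∀ x : 𝓛, ⁅C3, x⁆ = 0
  basis_indep : LinearIndependent ℂ (thvFam Lg Jg C1 C2 C3)
  basis_span : Submodule.span ℂ (Set.range (thvFam Lg Jg C1 C2 C3)) = ⊤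

/-- For any `α, β, F ∈ ℂ`, the assignments
`L m · G n = −(α+n+mβ) G (m+n)`, `J m · G n = F G (m+n)` and
`C₁ · G n = C₂ · G n = C₃ · G n = 0` define a Lie module structure over the twisted
Heisenberg–Virasoro algebra `𝓛` on the complex vector space `V_{α,β,F}` with basis
`{G n : n ∈ ℤ}` (realized as `ℤ →₀ ℂ` with `G n := Finsupp.single n 1`); that is, there
is a linear action `ρ` with these values on basis vectors satisfying
`ρ ⁅x, y⁆ v = ρ x (ρ y v) − ρ y (ρ x v)` for all `x y : 𝓛` and `v`. -/
theorem twistedHV_intermediate_series_module {𝓛 : Type*} [LieRing 𝓛] [LieAlgebra ℂ 𝓛]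
    (Lg Jg : ℤ → 𝓛) (C1 C2 C3 : 𝓛) (h : IsTwistedHV Lg Jg C1 C2 C3)
    (α β F : ℂ) :
    ∃ ρ : 𝓛 →ₗ[ℂ] Module.End ℂ (ℤ →₀ ℂ),
      (∀ m n : ℤ, ρ (Lg m) (Finsupp.single n (1 : ℂ)) =
          (-(α + (n : ℂ) + (m : ℂ) * β)) • Finsupp.single (m + n) (1 : ℂ)) ∧
      (∀ m n : ℤ, ρ (Jg m) (Finsupp.single n (1 : ℂ)) =
          F • Finsupp.single (m + n) (1 : ℂ)) ∧
      (∀ n : ℤ, ρ C1 (Finsupp.single n (1 : ℂ)) = 0 ∧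
          ρ C2 (Finsupp.single n (1 : ℂ)) = 0 ∧
          ρ C3 (Finsupp.single n (1 : ℂ)) = 0) ∧
      (∀ (x y : 𝓛) (v : ℤ →₀ ℂ), ρ ⁅x, y⁆ v = ρ x (ρ y v) - ρ y (ρ x v)) := by
  
  classical
  let Lop : ℤ → Module.End ℂ (ℤ →₀ ℂ) := fun m =>
    Finsupp.lift (ℤ →₀ ℂ) ℂ ℤ fun n =>
      (-(α + (n : ℂ) + (m : ℂ) * β)) • Finsupp.single (m + n) (1 : ℂ)
  let Jop : ℤ → Module.End ℂ (ℤ →₀ ℂ) := fun m =>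
    Finsupp.lift (ℤ →₀ ℂ) ℂ ℤ fun n => F • Finsupp.single (m + n) (1 : ℂ)
  have hL1 : ∀ m n : ℤ, Lop m (Finsupp.single n (1 : ℂ)) =
      (-(α + (n : ℂ) + (m : ℂ) * β)) • Finsupp.single (m + n) (1 : ℂ) := by
    intro m n
    show (Finsupp.lift (ℤ →₀ ℂ) ℂ ℤ fun n =>
      (-(α + (n : ℂ) + (m : ℂ) * β)) • Finsupp.single (m + n) (1 : ℂ))
        (Finsupp.single n (1 : ℂ)) = _
    rw [Finsupp.lift_apply, Finsupp.sum_single_index] <;> simp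
  have hJ1 : ∀ m n : ℤ, Jop m (Finsupp.single n (1 : ℂ)) =
      F • Finsupp.single (m + n) (1 : ℂ) := by
    intro m n
    show (Finsupp.lift (ℤ →₀ ℂ) ℂ ℤ fun n => F • Finsupp.single (m + n) (1 : ℂ))
        (Finsupp.single n (1 : ℂ)) = _
    rw [Finsupp.lift_apply, Finsupp.sum_single_index] <;> simp
  let b : Module.Basis ((Fin 2 × ℤ) ⊕ Fin 3) ℂ 𝓛 := Module.Basis.mk h.basis_indep h.basis_span.ge
  let f : (Fin 2 × ℤ) ⊕ Fin 3 → Module.End ℂ (ℤ →₀ ℂ) :=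
    Sum.elim (fun p => ![Lop, Jop] p.1 p.2) 0
  let ρ : 𝓛 →ₗ[ℂ] Module.End ℂ (ℤ →₀ ℂ) := b.constr ℂ f
  have hb : ∀ i, b i = thvFam Lg Jg C1 C2 C3 i := fun i => Module.Basis.mk_apply _ _ i
  have hρL : ∀ m : ℤ, ρ (Lg m) = Lop m := by
    intro m
    have h1 : Lg m = b (Sum.inl (0, m)) := by rw [hb]; rfl
    rw [h1]
    show (b.constr ℂ f) (b (Sum.inl (0, m))) = Lop m
    rw [Module.Basis.constr_basis]; rfl
  have hρJ : ∀ m : ℤ, ρ (Jg m) = Jop m := by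
    intro m
    have h1 : Jg m = b (Sum.inl (1, m)) := by rw [hb]; rfl
    rw [h1]
    show (b.constr ℂ f) (b (Sum.inl (1, m))) = Jop m
    rw [Module.Basis.constr_basis]; rfl
  have hρC : ∀ j : Fin 3, ρ (![C1, C2, C3] j) = 0 := by
    intro j
    have h1 : ![C1, C2, C3] j = b (Sum.inr j) := by rw [hb]; rfl
    rw [h1]
    show (b.constr ℂ f) (b (Sum.inr j)) = 0
    rw [Module.Basis.constr_basis]; rfl
  clear_value ρ f b Lop Jop
  have hρC1 : ρ C1 = 0 := hρC 0
  have hρC2 : ρ C2 = 0 := hρC 1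
  have hρC3 : ρ C3 = 0 := hρC 2
  -- bracket relation on basis pairs
  have baseLL : ∀ m n : ℤ,
      ρ ⁅Lg m, Lg n⁆ = ρ (Lg m) * ρ (Lg n) - ρ (Lg n) * ρ (Lg m) := by
    intro m n
    have hc : ρ (if m + n = 0 then (((m : ℂ) ^ 3 - (m : ℂ)) / 12) • C1 else 0) = 0 := by
      split_ifs
      · rw [map_smul, hρC1, smul_zero]
      · exact map_zero ρ
    rw [h.lie_LL m n, map_add, map_smul, hρL, hρL, hρL, hc, add_zero]
    apply Finsupp.basisSingleOne.ext
    intro k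
    have hidx : n + (m + k) = m + (n + k) := by ring
    simp only [Finsupp.coe_basisSingleOne, LinearMap.smul_apply, LinearMap.sub_apply,
      Module.End.mul_apply, hL1, map_smul, smul_smul, add_assoc, hidx]
    rw [← sub_smul]
    congr 1
    push_cast
    ring
  have baseLJ : ∀ m n : ℤ,
      ρ ⁅Lg m, Jg n⁆ = ρ (Lg m) * ρ (Jg n) - ρ (Jg n) * ρ (Lg m) := by
    intro m n
    have hc : ρ (if m + n = 0 then ((m : ℂ) ^ 2 + (m : ℂ)) • C2 else 0) = 0 := by
      split_ifs
      · rw [map_smul, hρC2, smul_zero]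
      · exact map_zero ρ
    rw [h.lie_LJ m n, map_sub, map_smul, hρJ, hρL, hρJ, hc]
    apply Finsupp.basisSingleOne.ext
    intro k
    have hidx : n + (m + k) = m + (n + k) := by ring
    simp only [Finsupp.coe_basisSingleOne, LinearMap.smul_apply, LinearMap.sub_apply,
      LinearMap.zero_apply, sub_zero, Module.End.mul_apply, hL1, hJ1, map_smul, smul_smul,
      add_assoc, hidx]
    rw [← sub_smul]
    congr 1
    push_cast
    ring
  have baseJL : ∀ m n : ℤ,
      ρ ⁅Jg m, Lg n⁆ = ρ (Jg m) * ρ (Lg n) - ρ (Lg n) * ρ (Jg m) := by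
    intro m n
    rw [← lie_skew, map_neg, baseLJ n m]
    abel
  have baseJJ : ∀ m n : ℤ,
      ρ ⁅Jg m, Jg n⁆ = ρ (Jg m) * ρ (Jg n) - ρ (Jg n) * ρ (Jg m) := by
    intro m n
    have hc : ρ ⁅Jg m, Jg n⁆ = 0 := by
      rw [h.lie_JJ m n]; split_ifs
      · rw [map_smul, hρC3, smul_zero]
      · exact map_zero ρ
    rw [hc, hρJ, hρJ]
    symm
    apply Finsupp.basisSingleOne.ext
    intro k
    have hidx : n + (m + k) = m + (n + k) := by ring
    simp only [Finsupp.coe_basisSingleOne, LinearMap.sub_apply, Module.End.mul_apply,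
      hJ1, map_smul, smul_smul, hidx, LinearMap.zero_apply, sub_self]
  have hcent : ∀ (j : Fin 3) (x : 𝓛), ⁅![C1, C2, C3] j, x⁆ = 0 := by
    intro j x
    fin_cases j
    · exact h.central_C1 x
    · exact h.central_C2 x
    · exact h.central_C3 x
  have baseCX : ∀ (j : Fin 3) (x : 𝓛),
      ρ ⁅![C1, C2, C3] j, x⁆ = ρ (![C1, C2, C3] j) * ρ x - ρ x * ρ (![C1, C2, C3] j) := by
    intro j x
    rw [hcent, map_zero, hρC]; ext w; simp
  have baseXC : ∀ (j : Fin 3) (x : 𝓛),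
      ρ ⁅x, ![C1, C2, C3] j⁆ = ρ x * ρ (![C1, C2, C3] j) - ρ (![C1, C2, C3] j) * ρ x := by
    intro j x
    rw [← lie_skew, hcent, neg_zero, map_zero, hρC]; ext w; simp
  have base : ∀ i j, ρ ⁅thvFam Lg Jg C1 C2 C3 i, thvFam Lg Jg C1 C2 C3 j⁆ =
      ρ (thvFam Lg Jg C1 C2 C3 i) * ρ (thvFam Lg Jg C1 C2 C3 j)
        - ρ (thvFam Lg Jg C1 C2 C3 j) * ρ (thvFam Lg Jg C1 C2 C3 i) := by
    rintro (⟨a, m⟩ | j) (⟨c, n⟩ | j')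
    · fin_cases a <;> fin_cases c
      · exact baseLL m n
      · exact baseLJ m n
      · exact baseJL m n
      · exact baseJJ m n
    · fin_cases a
      · exact baseXC j' (Lg m)
      · exact baseXC j' (Jg m)
    · fin_cases c
      · exact baseCX j (Lg n)
      · exact baseCX j (Jg n)
    · exact baseCX j (![C1, C2, C3] j')
  have key : ∀ x y : 𝓛, ρ ⁅x, y⁆ = ρ x * ρ y - ρ y * ρ x := by
    have hmem : ∀ x : 𝓛, x ∈ Submodule.span ℂ (Set.range (thvFam Lg Jg C1 C2 C3)) := by
      intro x; rw [h.basis_span]; trivial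
    intro x y
    induction hmem x using Submodule.span_induction with
    | mem x hx =>
      obtain ⟨i, rfl⟩ := hx
      induction hmem y using Submodule.span_induction with
      | mem y hy => obtain ⟨j, rfl⟩ := hy; exact base i j
      | zero =>
        simp only [lie_zero, map_zero]; ext w; simp
      | add y z _ _ hy hz =>
        rw [lie_add, map_add, hy, hz, map_add]; noncomm_ring
      | smul c y _ hy =>
        rw [lie_smul, map_smul, hy, map_smul]; ext w; simp [mul_sub]
    | zero =>
      simp only [zero_lie, map_zero]; ext w; simp
    | add x z _ _ hx hz =>
      rw [add_lie, map_add, hx, hz, map_add]; noncomm_ring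
    | smul c x _ hx =>
      rw [smul_lie, map_smul, hx, map_smul]; ext w; simp [mul_sub]
  refine ⟨ρ, ?_, ?_, ?_, ?_⟩
  · intro m n; rw [hρL]; exact hL1 m n
  · intro m n; rw [hρJ]; exact hJ1 m n
  · intro n
    refine ⟨?_, ?_, ?_⟩ <;> simp [hρC1, hρC2, hρC3]
  · intro x y v
    have hkv := congrArg (fun g : Module.End ℂ (ℤ →₀ ℂ) => g v) (key x y)
    simpa using hkv
end
end

section
/- Suppose α ∈ ℂ and α ∉ ℤ. Then the linear map φ₂ : 𝔏_{α,0,0} → 𝔏_{α,1,0} defined by φ₂(C_i) = C_i for i = 1, 2, 3 and φ₂(L_m) = L_m, φ₂(J_m) = J_m, φ₂(G_m) = (α+m)G_m for m ∈ ℤ is an isomorphism of Lie algebras. -/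
noncomputable section

open scoped BigOperators

/-- The combined family consisting of the vectors `L m`, `J m`, `G m` (`m : ℤ`) and
`C₁`, `C₂`, `C₃` in a candidate extended Heisenberg–Virasoro algebra. -/
def ehvFam {𝔏 : Type*} (Lg Jg Gg : ℤ → 𝔏) (C1 C2 C3 : 𝔏) :
    (Fin 3 × ℤ) ⊕ Fin 3 → 𝔏 :=
  Sum.elim (fun p => ![Lg, Jg, Gg] p.1 p.2) ![C1, C2, C3]

/-- A complex Lie algebra `𝔏`, equipped with distinguished elements
`Lg m`, `Jg m`, `Gg m` (`m : ℤ`) and `C1`, `C2`, `C3`, is a realization of the extended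
Heisenberg–Virasoro algebra `𝔏_{α,β,F}` if these elements form a basis, the elements
`C1`, `C2`, `C3` are central, and the defining bracket relations hold. -/
structure IsExtHV {𝔏 : Type*} [LieRing 𝔏] [LieAlgebra ℂ 𝔏]
    (α β F : ℂ) (Lg Jg Gg : ℤ → 𝔏) (C1 C2 C3 : 𝔏) : Prop where
  lie_LL : ∀ m n : ℤ, ⁅Lg m, Lg n⁆ =
      ((m : ℂ) - (n : ℂ)) • Lg (m + n) +
        (if m + n = 0 then (((m : ℂ) ^ 3 - (m : ℂ)) / 12) • C1 else 0)
  lie_LJ : ∀ m n : ℤ, ⁅Lg m, Jg n⁆ =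
      (-(n : ℂ)) • Jg (m + n) -
        (if m + n = 0 then ((m : ℂ) ^ 2 + (m : ℂ)) • C2 else 0)
  lie_JJ : ∀ m n : ℤ, ⁅Jg m, Jg n⁆ = (if m + n = 0 then (m : ℂ) • C3 else 0)
  lie_LG : ∀ m n : ℤ, ⁅Lg m, Gg n⁆ = (-(α + (n : ℂ) + (m : ℂ) * β)) • Gg (m + n)
  lie_JG : ∀ m n : ℤ, ⁅Jg m, Gg n⁆ = F • Gg (m + n)
  lie_GG : ∀ m n : ℤ, ⁅Gg m, Gg n⁆ = 0
  central_C1 : ∀ x : 𝔏, ⁅C1, x⁆ = 0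
  central_C2 : ∀ x : 𝔏, ⁅C2, x⁆ = 0
  central_C3 : ∀ x : 𝔏, ⁅C3, x⁆ = 0
  basis_indep : LinearIndependent ℂ (ehvFam Lg Jg Gg C1 C2 C3)
  basis_span : Submodule.span ℂ (Set.range (ehvFam Lg Jg Gg C1 C2 C3)) = ⊤

/-- Suppose `α ∈ ℂ` and `α ∉ ℤ`. Then the linear map
`φ₂ : 𝔏_{α,0,0} → 𝔏_{α,1,0}` defined on basis elements by `φ₂ (C i) = C i`,
`φ₂ (L m) = L m`, `φ₂ (J m) = J m` and `φ₂ (G m) = (α + m) • G m` is an isomorphism of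
Lie algebras. -/
theorem ehv_iso_alpha_not_int {𝔏 𝔏' : Type*} [LieRing 𝔏] [LieAlgebra ℂ 𝔏]
    [LieRing 𝔏'] [LieAlgebra ℂ 𝔏'] (α : ℂ) (hα : ∀ n : ℤ, α ≠ (n : ℂ))
    (Lg Jg Gg : ℤ → 𝔏) (C1 C2 C3 : 𝔏) (Lg' Jg' Gg' : ℤ → 𝔏') (C1' C2' C3' : 𝔏')
    (h : IsExtHV α 0 0 Lg Jg Gg C1 C2 C3)
    (h' : IsExtHV α 1 0 Lg' Jg' Gg' C1' C2' C3') :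
    ∃ e : 𝔏 ≃ₗ⁅ℂ⁆ 𝔏',
      (∀ m : ℤ, e (Lg m) = Lg' m) ∧
      (∀ m : ℤ, e (Jg m) = Jg' m) ∧
      (∀ m : ℤ, e (Gg m) = (α + (m : ℂ)) • Gg' m) ∧
      e C1 = C1' ∧ e C2 = C2' ∧ e C3 = C3' := by
  classical
  have hαm : ∀ m : ℤ, α + (m : ℂ) ≠ 0 := by
    intro m hm
    exact hα (-m) (by push_cast; linear_combination hm)
  let B : Module.Basis ((Fin 3 × ℤ) ⊕ Fin 3) ℂ 𝔏 := Module.Basis.mk h.basis_indep h.basis_span.ge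
  let B' : Module.Basis ((Fin 3 × ℤ) ⊕ Fin 3) ℂ 𝔏' := Module.Basis.mk h'.basis_indep h'.basis_span.ge
  have eL : ∀ m : ℤ, B (Sum.inl (0, m)) = Lg m := fun m => Module.Basis.mk_apply _ _ _
  have eJ : ∀ m : ℤ, B (Sum.inl (1, m)) = Jg m := fun m => Module.Basis.mk_apply _ _ _
  have eG : ∀ m : ℤ, B (Sum.inl (2, m)) = Gg m := fun m => Module.Basis.mk_apply _ _ _
  have eC1 : B (Sum.inr 0) = C1 := Module.Basis.mk_apply _ _ _
  have eC2 : B (Sum.inr 1) = C2 := Module.Basis.mk_apply _ _ _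
  have eC3 : B (Sum.inr 2) = C3 := Module.Basis.mk_apply _ _ _
  have eL' : ∀ m : ℤ, B' (Sum.inl (0, m)) = Lg' m := fun m => Module.Basis.mk_apply _ _ _
  have eJ' : ∀ m : ℤ, B' (Sum.inl (1, m)) = Jg' m := fun m => Module.Basis.mk_apply _ _ _
  have eG' : ∀ m : ℤ, B' (Sum.inl (2, m)) = Gg' m := fun m => Module.Basis.mk_apply _ _ _
  have eC1' : B' (Sum.inr 0) = C1' := Module.Basis.mk_apply _ _ _
  have eC2' : B' (Sum.inr 1) = C2' := Module.Basis.mk_apply _ _ _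
  have eC3' : B' (Sum.inr 2) = C3' := Module.Basis.mk_apply _ _ _
  let v : (Fin 3 × ℤ) ⊕ Fin 3 → 𝔏' :=
    ehvFam Lg' Jg' (fun m => (α + (m : ℂ)) • Gg' m) C1' C2' C3'
  let w : (Fin 3 × ℤ) ⊕ Fin 3 → 𝔏 :=
    ehvFam Lg Jg (fun m => (α + (m : ℂ))⁻¹ • Gg m) C1 C2 C3
  let f : 𝔏 →ₗ[ℂ] 𝔏' := B.constr ℂ v
  let g : 𝔏' →ₗ[ℂ] 𝔏 := B'.constr ℂ w
  have fL : ∀ m : ℤ, f (Lg m) = Lg' m := by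
    intro m; rw [← eL m]; exact B.constr_basis ℂ v _
  have fJ : ∀ m : ℤ, f (Jg m) = Jg' m := by
    intro m; rw [← eJ m]; exact B.constr_basis ℂ v _
  have fG : ∀ m : ℤ, f (Gg m) = (α + (m : ℂ)) • Gg' m := by
    intro m; rw [← eG m]; exact B.constr_basis ℂ v _
  have fC1 : f C1 = C1' := by rw [← eC1]; exact B.constr_basis ℂ v _
  have fC2 : f C2 = C2' := by rw [← eC2]; exact B.constr_basis ℂ v _
  have fC3 : f C3 = C3' := by rw [← eC3]; exact B.constr_basis ℂ v _
  have gL : ∀ m : ℤ, g (Lg' m) = Lg m := by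
    intro m; rw [← eL' m]; exact B'.constr_basis ℂ w _
  have gJ : ∀ m : ℤ, g (Jg' m) = Jg m := by
    intro m; rw [← eJ' m]; exact B'.constr_basis ℂ w _
  have gG : ∀ m : ℤ, g (Gg' m) = (α + (m : ℂ))⁻¹ • Gg m := by
    intro m; rw [← eG' m]; exact B'.constr_basis ℂ w _
  have gC1 : g C1' = C1 := by rw [← eC1']; exact B'.constr_basis ℂ w _
  have gC2 : g C2' = C2 := by rw [← eC2']; exact B'.constr_basis ℂ w _
  have gC3 : g C3' = C3 := by rw [← eC3']; exact B'.constr_basis ℂ w _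
  have hgf : g.comp f = LinearMap.id := by
    apply B.ext; intro i
    rcases i with ⟨k, m⟩ | k
    · fin_cases k
      · simp [eL, fL, gL]
      · simp [eJ, fJ, gJ]
      · simp [eG, fG, map_smul, gG, smul_smul, mul_inv_cancel₀ (hαm m)]
    · fin_cases k
      · simp [eC1, fC1, gC1]
      · simp [eC2, fC2, gC2]
      · simp [eC3, fC3, gC3]
  have hfg : f.comp g = LinearMap.id := by
    apply B'.ext; intro i
    rcases i with ⟨k, m⟩ | k
    · fin_cases k
      · simp [eL', fL, gL]
      · simp [eJ', fJ, gJ]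
      · simp [eG', gG, map_smul, fG, smul_smul, inv_mul_cancel₀ (hαm m)]
    · fin_cases k
      · simp [eC1', fC1, gC1]
      · simp [eC2', fC2, gC2]
      · simp [eC3', fC3, gC3]
  -- bracket computations on generators
  have hLL : ∀ m n : ℤ, f ⁅Lg m, Lg n⁆ = ⁅f (Lg m), f (Lg n)⁆ := by
    intro m n
    rw [fL, fL, h.lie_LL, h'.lie_LL, map_add, map_smul, fL]
    split_ifs with hmn
    · rw [map_smul, fC1]
    · rw [map_zero]
  have hLJ : ∀ m n : ℤ, f ⁅Lg m, Jg n⁆ = ⁅f (Lg m), f (Jg n)⁆ := by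
    intro m n
    rw [fL, fJ, h.lie_LJ, h'.lie_LJ, map_sub, map_smul, fJ]
    split_ifs with hmn
    · rw [map_smul, fC2]
    · rw [map_zero]
  have hJJ : ∀ m n : ℤ, f ⁅Jg m, Jg n⁆ = ⁅f (Jg m), f (Jg n)⁆ := by
    intro m n
    rw [fJ, fJ, h.lie_JJ, h'.lie_JJ]
    split_ifs with hmn
    · rw [map_smul, fC3]
    · rw [map_zero]
  have hLG : ∀ m n : ℤ, f ⁅Lg m, Gg n⁆ = ⁅f (Lg m), f (Gg n)⁆ := by
    intro m n
    rw [fL, fG, h.lie_LG, lie_smul, h'.lie_LG, map_smul, fG, smul_smul, smul_smul]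
    congr 1
    push_cast
    ring
  have hJG : ∀ m n : ℤ, f ⁅Jg m, Gg n⁆ = ⁅f (Jg m), f (Gg n)⁆ := by
    intro m n
    rw [fJ, fG, h.lie_JG, lie_smul, h'.lie_JG]
    simp
  have hGG : ∀ m n : ℤ, f ⁅Gg m, Gg n⁆ = ⁅f (Gg m), f (Gg n)⁆ := by
    intro m n
    rw [fG, fG, h.lie_GG, lie_smul, smul_lie, h'.lie_GG]
    simp
  have hbase : ∀ i j, f ⁅B i, B j⁆ = ⁅f (B i), f (B j)⁆ := by
    have skew : ∀ a b : 𝔏, f ⁅a, b⁆ = ⁅f a, f b⁆ → f ⁅b, a⁆ = ⁅f b, f a⁆ := by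
      intro a b hab
      rw [← lie_skew, map_neg, hab, lie_skew]
    intro i j
    rcases i with ⟨ki, m⟩ | ki
    · rcases j with ⟨kj, n⟩ | kj
      · fin_cases ki <;> fin_cases kj <;>
          simp only [Fin.zero_eta, Fin.mk_one, Fin.reduceFinMk]
        · rw [eL, eL]; exact hLL m n
        · rw [eL, eJ]; exact hLJ m n
        · rw [eL, eG]; exact hLG m n
        · rw [eJ, eL]; exact skew _ _ (hLJ n m)
        · rw [eJ, eJ]; exact hJJ m n
        · rw [eJ, eG]; exact hJG m n
        · rw [eG, eL]; exact skew _ _ (hLG n m)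
        · rw [eG, eJ]; exact skew _ _ (hJG n m)
        · rw [eG, eG]; exact hGG m n
      · fin_cases kj <;> simp only [Fin.zero_eta, Fin.mk_one, Fin.reduceFinMk]
        · rw [eC1]; apply skew; rw [fC1, h.central_C1, map_zero, h'.central_C1]
        · rw [eC2]; apply skew; rw [fC2, h.central_C2, map_zero, h'.central_C2]
        · rw [eC3]; apply skew; rw [fC3, h.central_C3, map_zero, h'.central_C3]
    · fin_cases ki <;> simp only [Fin.zero_eta, Fin.mk_one, Fin.reduceFinMk]
      · rw [eC1, fC1, h.central_C1, map_zero, h'.central_C1]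
      · rw [eC2, fC2, h.central_C2, map_zero, h'.central_C2]
      · rw [eC3, fC3, h.central_C3, map_zero, h'.central_C3]
  have key : ∀ x y : 𝔏, f ⁅x, y⁆ = ⁅f x, f y⁆ := by
    have key1 : ∀ i (y : 𝔏), f ⁅B i, y⁆ = ⁅f (B i), f y⁆ := by
      intro i y
      have hy : y ∈ Submodule.span ℂ (Set.range ⇑B) := by
        rw [B.span_eq]; exact Submodule.mem_top
      induction hy using Submodule.span_induction with
      | mem z hz => obtain ⟨j, rfl⟩ := hz; exact hbase i j
      | zero => simp
      | add a b _ _ ha hb => rw [lie_add, map_add, ha, hb, map_add, lie_add]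
      | smul c a _ ha => rw [lie_smul, map_smul, ha, map_smul, lie_smul]
    intro x y
    have hx : x ∈ Submodule.span ℂ (Set.range ⇑B) := by
      rw [B.span_eq]; exact Submodule.mem_top
    induction hx using Submodule.span_induction with
    | mem z hz => obtain ⟨j, rfl⟩ := hz; exact key1 j y
    | zero => simp
    | add a b _ _ ha hb => rw [add_lie, map_add, ha, hb, map_add, add_lie]
    | smul c a _ ha => rw [smul_lie, map_smul, ha, map_smul, smul_lie]
  refine ⟨{ toLinearMap := f, map_lie' := key _ _, invFun := g,
            left_inv := fun x => LinearMap.congr_fun hgf x,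
            right_inv := fun x => LinearMap.congr_fun hfg x }, fL, fJ, fG, fC1, fC2, fC3⟩
end
end

section
/- Let I be the (central) ideal of 𝔏_{0,0,1} spanned by C₃ − 2C₂, and let I' be the corresponding ideal of 𝔏_{0,−1,−1} spanned by C₃ − 2C₂. Then the linear map φ₄ determined by φ₄(C_i) = C_i for i = 1, 2 and φ₄(L_m) = L_m + m J_m, φ₄(J_m) = −J_m + 2δ_{m,0}C₂, φ₄(G_m) = −G_m for m ∈ ℤ induces an isomorphism of Lie algebras 𝔏_{0,0,1}/I ≅ 𝔏_{0,−1,−1}/I'. -/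
noncomputable section

open scoped BigOperators

/-- Let `I` be the central ideal of `𝔏_{0,0,1}` spanned by `C₃ − 2C₂`,
and let `I'` be the corresponding ideal of `𝔏_{0,−1,−1}`. Then the map `φ₄` determined
by `φ₄ (C i) = C i` for `i = 1, 2`, `φ₄ (L m) = L m + m J m`,
`φ₄ (J m) = −J m + 2 δ_{m,0} C₂` and `φ₄ (G m) = −G m` induces an isomorphism of Lie
algebras `𝔏_{0,0,1}/I ≅ 𝔏_{0,−1,−1}/I'`. -/
theorem ehv_iso_quotient_C3_eq_two_C2 {𝔏 𝔏' : Type*} [LieRing 𝔏] [LieAlgebra ℂ 𝔏]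
    [LieRing 𝔏'] [LieAlgebra ℂ 𝔏']
    (Lg Jg Gg : ℤ → 𝔏) (C1 C2 C3 : 𝔏) (Lg' Jg' Gg' : ℤ → 𝔏') (C1' C2' C3' : 𝔏')
    (h : IsExtHV 0 0 1 Lg Jg Gg C1 C2 C3)
    (h' : IsExtHV 0 (-1) (-1) Lg' Jg' Gg' C1' C2' C3')
    (I : LieIdeal ℂ 𝔏) (hI : (I : Submodule ℂ 𝔏) = Submodule.span ℂ {C3 - (2 : ℂ) • C2})
    (I' : LieIdeal ℂ 𝔏')
    (hI' : (I' : Submodule ℂ 𝔏') = Submodule.span ℂ {C3' - (2 : ℂ) • C2'}) :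
    ∃ e : (𝔏 ⧸ I) ≃ₗ⁅ℂ⁆ (𝔏' ⧸ I'),
      (∀ m : ℤ, e (LieSubmodule.Quotient.mk (N := I) (Lg m)) =
          LieSubmodule.Quotient.mk (N := I') (Lg' m + (m : ℂ) • Jg' m)) ∧
      (∀ m : ℤ, e (LieSubmodule.Quotient.mk (N := I) (Jg m)) =
          LieSubmodule.Quotient.mk (N := I')
            (-Jg' m + (if m = 0 then (2 : ℂ) • C2' else 0))) ∧
      (∀ m : ℤ, e (LieSubmodule.Quotient.mk (N := I) (Gg m)) =
          LieSubmodule.Quotient.mk (N := I') (-Gg' m)) ∧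
      e (LieSubmodule.Quotient.mk (N := I) C1) =
        LieSubmodule.Quotient.mk (N := I') C1' ∧
      e (LieSubmodule.Quotient.mk (N := I) C2) =
        LieSubmodule.Quotient.mk (N := I') C2' := by
  classical
  -- bases
  let b : Module.Basis ((Fin 3 × ℤ) ⊕ Fin 3) ℂ 𝔏 := Module.Basis.mk h.basis_indep h.basis_span.ge
  let b' : Module.Basis ((Fin 3 × ℤ) ⊕ Fin 3) ℂ 𝔏' := Module.Basis.mk h'.basis_indep h'.basis_span.ge
  let v : (Fin 3 × ℤ) ⊕ Fin 3 → 𝔏' := Sum.elim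
    (fun p => ![fun m => Lg' m + (m : ℂ) • Jg' m,
                fun m => -Jg' m + (if m = 0 then (2 : ℂ) • C2' else 0),
                fun m => -Gg' m] p.1 p.2) ![C1', C2', C3']
  let w : (Fin 3 × ℤ) ⊕ Fin 3 → 𝔏 := Sum.elim
    (fun p => ![fun m => Lg m + (m : ℂ) • Jg m,
                fun m => -Jg m + (if m = 0 then (2 : ℂ) • C2 else 0),
                fun m => -Gg m] p.1 p.2) ![C1, C2, C3]
  let φ : 𝔏 →ₗ[ℂ] 𝔏' := b.constr ℂ v
  let ψ : 𝔏' →ₗ[ℂ] 𝔏 := b'.constr ℂ w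
  have bL : ∀ m, b (Sum.inl (0, m)) = Lg m := fun m => by
    simp [b, Module.Basis.mk_apply, ehvFam]
  have bJ : ∀ m, b (Sum.inl (1, m)) = Jg m := fun m => by
    simp [b, Module.Basis.mk_apply, ehvFam]
  have bG : ∀ m, b (Sum.inl (2, m)) = Gg m := fun m => by
    simp [b, Module.Basis.mk_apply, ehvFam]
  have bC1 : b (Sum.inr 0) = C1 := by simp [b, Module.Basis.mk_apply, ehvFam]
  have bC2 : b (Sum.inr 1) = C2 := by simp [b, Module.Basis.mk_apply, ehvFam]
  have bC3 : b (Sum.inr 2) = C3 := by simp [b, Module.Basis.mk_apply, ehvFam]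
  have bL' : ∀ m, b' (Sum.inl (0, m)) = Lg' m := fun m => by
    simp [b', Module.Basis.mk_apply, ehvFam]
  have bJ' : ∀ m, b' (Sum.inl (1, m)) = Jg' m := fun m => by
    simp [b', Module.Basis.mk_apply, ehvFam]
  have bG' : ∀ m, b' (Sum.inl (2, m)) = Gg' m := fun m => by
    simp [b', Module.Basis.mk_apply, ehvFam]
  have bC1' : b' (Sum.inr 0) = C1' := by simp [b', Module.Basis.mk_apply, ehvFam]
  have bC2' : b' (Sum.inr 1) = C2' := by simp [b', Module.Basis.mk_apply, ehvFam]
  have bC3' : b' (Sum.inr 2) = C3' := by simp [b', Module.Basis.mk_apply, ehvFam]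
  have φL : ∀ m, φ (Lg m) = Lg' m + (m : ℂ) • Jg' m := fun m => by
    rw [← bL m]; show b.constr ℂ v _ = _; rw [Module.Basis.constr_basis]; simp [v]
  have φJ : ∀ m, φ (Jg m) = -Jg' m + (if m = 0 then (2 : ℂ) • C2' else 0) := fun m => by
    rw [← bJ m]; show b.constr ℂ v _ = _; rw [Module.Basis.constr_basis]; simp [v]
  have φG : ∀ m, φ (Gg m) = -Gg' m := fun m => by
    rw [← bG m]; show b.constr ℂ v _ = _; rw [Module.Basis.constr_basis]; simp [v]
  have φC1 : φ C1 = C1' := by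
    rw [← bC1]; show b.constr ℂ v _ = _; rw [Module.Basis.constr_basis]; simp [v]
  have φC2 : φ C2 = C2' := by
    rw [← bC2]; show b.constr ℂ v _ = _; rw [Module.Basis.constr_basis]; simp [v]
  have φC3 : φ C3 = C3' := by
    rw [← bC3]; show b.constr ℂ v _ = _; rw [Module.Basis.constr_basis]; simp [v]
  have ψL : ∀ m, ψ (Lg' m) = Lg m + (m : ℂ) • Jg m := fun m => by
    rw [← bL' m]; show b'.constr ℂ w _ = _; rw [Module.Basis.constr_basis]; simp [w]
  have ψJ : ∀ m, ψ (Jg' m) = -Jg m + (if m = 0 then (2 : ℂ) • C2 else 0) := fun m => by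
    rw [← bJ' m]; show b'.constr ℂ w _ = _; rw [Module.Basis.constr_basis]; simp [w]
  have ψG : ∀ m, ψ (Gg' m) = -Gg m := fun m => by
    rw [← bG' m]; show b'.constr ℂ w _ = _; rw [Module.Basis.constr_basis]; simp [w]
  have ψC1 : ψ C1' = C1 := by
    rw [← bC1']; show b'.constr ℂ w _ = _; rw [Module.Basis.constr_basis]; simp [w]
  have ψC2 : ψ C2' = C2 := by
    rw [← bC2']; show b'.constr ℂ w _ = _; rw [Module.Basis.constr_basis]; simp [w]
  have ψC3 : ψ C3' = C3 := by
    rw [← bC3']; show b'.constr ℂ w _ = _; rw [Module.Basis.constr_basis]; simp [w]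
  -- ψ ∘ φ = id and φ ∘ ψ = id
  have hmemb : ∀ x : 𝔏, x ∈ Submodule.span ℂ (Set.range (ehvFam Lg Jg Gg C1 C2 C3)) :=
    fun x => h.basis_span.symm ▸ Submodule.mem_top
  have hmemb' : ∀ x : 𝔏', x ∈ Submodule.span ℂ (Set.range (ehvFam Lg' Jg' Gg' C1' C2' C3')) :=
    fun x => h'.basis_span.symm ▸ Submodule.mem_top
  have hψφ : ∀ x, ψ (φ x) = x := by
    intro x
    induction hmemb x using Submodule.span_induction with
    | mem z hz =>
      obtain ⟨idx, rfl⟩ := hz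
      rcases idx with ⟨i, m⟩ | i
      · fin_cases i
        · show ψ (φ (Lg m)) = Lg m
          rw [φL, map_add, map_smul, ψL, ψJ]
          by_cases hm : m = 0
          · subst hm; simp
          · rw [if_neg hm]; module
        · show ψ (φ (Jg m)) = Jg m
          rw [φJ]
          by_cases hm : m = 0
          · subst hm
            rw [if_pos rfl, map_add, map_neg, map_smul, ψJ, ψC2, if_pos rfl]
            module
          · rw [if_neg hm, add_zero, map_neg, ψJ, if_neg hm]
            module
        · show ψ (φ (Gg m)) = Gg m
          rw [φG, map_neg, ψG, neg_neg]
      · fin_cases i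
        · show ψ (φ C1) = C1; rw [φC1, ψC1]
        · show ψ (φ C2) = C2; rw [φC2, ψC2]
        · show ψ (φ C3) = C3; rw [φC3, ψC3]
    | zero => simp
    | add x y hx hy ihx ihy => rw [map_add, map_add, ihx, ihy]
    | smul r x hx ihx => rw [map_smul, map_smul, ihx]
  have hφψ : ∀ x, φ (ψ x) = x := by
    intro x
    induction hmemb' x using Submodule.span_induction with
    | mem z hz =>
      obtain ⟨idx, rfl⟩ := hz
      rcases idx with ⟨i, m⟩ | i
      · fin_cases i
        · show φ (ψ (Lg' m)) = Lg' m
          rw [ψL, map_add, map_smul, φL, φJ]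
          by_cases hm : m = 0
          · subst hm; simp
          · rw [if_neg hm]; module
        · show φ (ψ (Jg' m)) = Jg' m
          rw [ψJ]
          by_cases hm : m = 0
          · subst hm
            rw [if_pos rfl, map_add, map_neg, map_smul, φJ, φC2, if_pos rfl]
            module
          · rw [if_neg hm, add_zero, map_neg, φJ, if_neg hm]
            module
        · show φ (ψ (Gg' m)) = Gg' m
          rw [ψG, map_neg, φG, neg_neg]
      · fin_cases i
        · show φ (ψ C1') = C1'; rw [ψC1, φC1]
        · show φ (ψ C2') = C2'; rw [ψC2, φC2]
        · show φ (ψ C3') = C3'; rw [ψC3, φC3]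
    | zero => simp
    | add x y hx hy ihx ihy => rw [map_add, map_add, ihx, ihy]
    | smul r x hx ihx => rw [map_smul, map_smul, ihx]
  -- auxiliary bracket lemmas
  have rc1' : ∀ x : 𝔏', ⁅x, C1'⁆ = 0 := fun x => by
    rw [← lie_skew, h'.central_C1, neg_zero]
  have rc2' : ∀ x : 𝔏', ⁅x, C2'⁆ = 0 := fun x => by
    rw [← lie_skew, h'.central_C2, neg_zero]
  have rc3' : ∀ x : 𝔏', ⁅x, C3'⁆ = 0 := fun x => by
    rw [← lie_skew, h'.central_C3, neg_zero]
  have rc1 : ∀ x : 𝔏, ⁅x, C1⁆ = 0 := fun x => by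
    rw [← lie_skew, h.central_C1, neg_zero]
  have rc2 : ∀ x : 𝔏, ⁅x, C2⁆ = 0 := fun x => by
    rw [← lie_skew, h.central_C2, neg_zero]
  have rc3 : ∀ x : 𝔏, ⁅x, C3⁆ = 0 := fun x => by
    rw [← lie_skew, h.central_C3, neg_zero]
  have lJL' : ∀ m n : ℤ, ⁅Jg' m, Lg' n⁆ =
      (m : ℂ) • Jg' (m + n) + (if m + n = 0 then ((n : ℂ) ^ 2 + (n : ℂ)) • C2' else 0) := by
    intro m n
    rw [← lie_skew, h'.lie_LJ, add_comm n m]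
    split_ifs <;> module
  have iteC2r : ∀ (c : Prop) (_ : Decidable c) (x : 𝔏'),
      ⁅x, (if c then (2 : ℂ) • C2' else (0 : 𝔏'))⁆ = 0 := by
    intro c inst x; split_ifs <;> simp [rc2']
  have iteC2l : ∀ (c : Prop) (_ : Decidable c) (x : 𝔏'),
      ⁅(if c then (2 : ℂ) • C2' else (0 : 𝔏')), x⁆ = 0 := by
    intro c inst x; split_ifs <;> simp [h'.central_C2]
  -- the key computations on basis vectors
  have memI' : ∀ z : 𝔏', (∃ c : ℂ, c • (C3' - (2 : ℂ) • C2') = z) →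
      z ∈ (I' : Submodule ℂ 𝔏') := by
    rintro z ⟨c, rfl⟩
    rw [hI']
    exact Submodule.smul_mem _ _ (Submodule.mem_span_singleton_self _)
  have kLL : ∀ m n : ℤ, φ ⁅Lg m, Lg n⁆ - ⁅φ (Lg m), φ (Lg n)⁆ ∈ (I' : Submodule ℂ 𝔏') := by
    intro m n
    apply memI'
    by_cases hmn : m + n = 0
    · obtain rfl : n = -m := by omega
      refine ⟨(m : ℂ) ^ 3, ?_⟩
      simp only [h.lie_LL, φL, map_add, map_smul, φC1, lie_add, add_lie, lie_smul, smul_lie,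
        h'.lie_LL, h'.lie_LJ, lJL', h'.lie_JJ, add_neg_cancel, if_pos rfl, reduceIte]
      push_cast
      module
    · refine ⟨0, ?_⟩
      simp only [h.lie_LL, φL, map_add, map_smul, φC1, lie_add, add_lie, lie_smul, smul_lie,
        h'.lie_LL, h'.lie_LJ, lJL', h'.lie_JJ, if_neg hmn, map_zero, add_zero, smul_zero,
        sub_zero]
      module
  have kLJ : ∀ m n : ℤ, φ ⁅Lg m, Jg n⁆ - ⁅φ (Lg m), φ (Jg n)⁆ ∈ (I' : Submodule ℂ 𝔏') := by
    intro m n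
    apply memI'
    by_cases hmn : m + n = 0
    · obtain rfl : n = -m := by omega
      refine ⟨(m : ℂ) ^ 2, ?_⟩
      simp only [h.lie_LJ, φJ, φL, map_sub, map_smul, map_add, φC2, lie_add, add_lie, lie_smul,
        smul_lie, lie_neg, neg_lie, h'.lie_LJ, h'.lie_JJ, lJL', iteC2r, iteC2l,
        add_neg_cancel, if_pos rfl, reduceIte]
      push_cast
      module
    · refine ⟨0, ?_⟩
      simp only [h.lie_LJ, φJ, φL, map_sub, map_smul, map_add, φC2, lie_add, add_lie, lie_smul,
        smul_lie, lie_neg, neg_lie, h'.lie_LJ, h'.lie_JJ, lJL', iteC2r, iteC2l,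
        if_neg hmn, map_zero, add_zero, smul_zero, sub_zero, neg_zero]
      module
  have kJJ : ∀ m n : ℤ, φ ⁅Jg m, Jg n⁆ - ⁅φ (Jg m), φ (Jg n)⁆ ∈ (I' : Submodule ℂ 𝔏') := by
    intro m n
    apply memI'
    refine ⟨0, ?_⟩
    by_cases hmn : m + n = 0
    · simp only [h.lie_JJ, φJ, φL, map_smul, φC3, lie_add, add_lie, lie_neg, neg_lie,
        h'.lie_JJ, iteC2r, iteC2l, if_pos hmn]
      module
    · simp only [h.lie_JJ, φJ, φL, map_smul, φC3, lie_add, add_lie, lie_neg, neg_lie,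
        h'.lie_JJ, iteC2r, iteC2l, if_neg hmn, map_zero, smul_zero, add_zero, neg_zero,
        sub_zero, neg_neg]
      module
  have kLG : ∀ m n : ℤ, φ ⁅Lg m, Gg n⁆ - ⁅φ (Lg m), φ (Gg n)⁆ ∈ (I' : Submodule ℂ 𝔏') := by
    intro m n
    apply memI'
    refine ⟨0, ?_⟩
    simp only [h.lie_LG, φG, φL, map_smul, lie_add, add_lie, lie_smul, smul_lie, lie_neg, neg_lie,
      h'.lie_LG, h'.lie_JG]
    push_cast
    module
  have kJG : ∀ m n : ℤ, φ ⁅Jg m, Gg n⁆ - ⁅φ (Jg m), φ (Gg n)⁆ ∈ (I' : Submodule ℂ 𝔏') := by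
    intro m n
    apply memI'
    refine ⟨0, ?_⟩
    simp only [h.lie_JG, φG, φJ, map_smul, map_neg, lie_add, add_lie, lie_neg, neg_lie,
      h'.lie_JG, iteC2l, one_smul]
    module
  have kGG : ∀ m n : ℤ, φ ⁅Gg m, Gg n⁆ - ⁅φ (Gg m), φ (Gg n)⁆ ∈ (I' : Submodule ℂ 𝔏') := by
    intro m n
    apply memI'
    refine ⟨0, ?_⟩
    simp only [h.lie_GG, φG, map_zero, lie_neg, neg_lie, h'.lie_GG, neg_zero, sub_zero]
    module
  have symmK : ∀ x y : 𝔏, (φ ⁅x, y⁆ - ⁅φ x, φ y⁆ ∈ (I' : Submodule ℂ 𝔏')) →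
      (φ ⁅y, x⁆ - ⁅φ y, φ x⁆ ∈ (I' : Submodule ℂ 𝔏')) := by
    intro x y hxy
    have hrw : φ ⁅y, x⁆ - ⁅φ y, φ x⁆ = -(φ ⁅x, y⁆ - ⁅φ x, φ y⁆) := by
      rw [← lie_skew x y, ← lie_skew (φ x) (φ y), map_neg]; abel
    rw [hrw]
    exact neg_mem hxy
  -- key lemma
  have key : ∀ x y : 𝔏, φ ⁅x, y⁆ - ⁅φ x, φ y⁆ ∈ (I' : Submodule ℂ 𝔏') := by
    intro x y
    refine Submodule.span_induction₂
      (p := fun x y _ _ => φ ⁅x, y⁆ - ⁅φ x, φ y⁆ ∈ (I' : Submodule ℂ 𝔏'))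
      ?_ ?_ ?_ ?_ ?_ ?_ ?_ (hmemb x) (hmemb y)
    · rintro _ _ ⟨ia, rfl⟩ ⟨ib, rfl⟩
      -- handle central second argument uniformly
      rcases ib with ⟨j, n⟩ | j
      · rcases ia with ⟨i, m⟩ | i
        · fin_cases i <;> fin_cases j
          · simpa [ehvFam] using kLL _ n
          · simpa [ehvFam] using kLJ _ n
          · simpa [ehvFam] using kLG _ n
          · simpa [ehvFam] using symmK _ _ (kLJ n _)
          · simpa [ehvFam] using kJJ _ n
          · simpa [ehvFam] using kJG _ n
          · simpa [ehvFam] using symmK _ _ (kLG n _)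
          · simpa [ehvFam] using symmK _ _ (kJG n _)
          · simpa [ehvFam] using kGG _ n
        · fin_cases i <;>
            simp [ehvFam, h.central_C1, h.central_C2, h.central_C3, φC1, φC2, φC3,
              h'.central_C1, h'.central_C2, h'.central_C3]
      · fin_cases j <;>
          simp [ehvFam, rc1, rc2, rc3, φC1, φC2, φC3, rc1', rc2', rc3']
    · intro y hy; simpa using Submodule.zero_mem _
    · intro x hx; simpa using Submodule.zero_mem _
    · intro x y z hx hy hz h1 h2
      have hrw : φ ⁅x + y, z⁆ - ⁅φ (x + y), φ z⁆ =
          (φ ⁅x, z⁆ - ⁅φ x, φ z⁆) + (φ ⁅y, z⁆ - ⁅φ y, φ z⁆) := by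
        simp only [add_lie, map_add]; abel
      rw [hrw]; exact Submodule.add_mem _ h1 h2
    · intro x y z hx hy hz h1 h2
      have hrw : φ ⁅x, y + z⁆ - ⁅φ x, φ (y + z)⁆ =
          (φ ⁅x, y⁆ - ⁅φ x, φ y⁆) + (φ ⁅x, z⁆ - ⁅φ x, φ z⁆) := by
        simp only [lie_add, map_add]; abel
      rw [hrw]; exact Submodule.add_mem _ h1 h2
    · intro r x y hx hy h1
      have hrw : φ ⁅r • x, y⁆ - ⁅φ (r • x), φ y⁆ = r • (φ ⁅x, y⁆ - ⁅φ x, φ y⁆) := by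
        simp only [smul_lie, map_smul, smul_sub]
      rw [hrw]; exact Submodule.smul_mem _ _ h1
    · intro r x y hx hy h1
      have hrw : φ ⁅x, r • y⁆ - ⁅φ x, φ (r • y)⁆ = r • (φ ⁅x, y⁆ - ⁅φ x, φ y⁆) := by
        simp only [lie_smul, map_smul, smul_sub]
      rw [hrw]; exact Submodule.smul_mem _ _ h1
  -- quotient maps
  let fbar : 𝔏 →ₗ[ℂ] (𝔏' ⧸ I') := (Submodule.mkQ (I' : Submodule ℂ 𝔏')).comp φ
  let gbar : 𝔏' →ₗ[ℂ] (𝔏 ⧸ I) := (Submodule.mkQ (I : Submodule ℂ 𝔏)).comp ψ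
  have hkerf : (I : Submodule ℂ 𝔏) ≤ LinearMap.ker fbar := by
    rw [hI, Submodule.span_le, Set.singleton_subset_iff]
    show fbar (C3 - (2 : ℂ) • C2) = 0
    show Submodule.mkQ _ (φ (C3 - (2 : ℂ) • C2)) = 0
    rw [map_sub, map_smul, φC3, φC2]
    rw [Submodule.mkQ_apply, Submodule.Quotient.mk_eq_zero, hI']
    exact Submodule.mem_span_singleton_self _
  have hkerg : (I' : Submodule ℂ 𝔏') ≤ LinearMap.ker gbar := by
    rw [hI', Submodule.span_le, Set.singleton_subset_iff]
    show gbar (C3' - (2 : ℂ) • C2') = 0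
    show Submodule.mkQ _ (ψ (C3' - (2 : ℂ) • C2')) = 0
    rw [map_sub, map_smul, ψC3, ψC2]
    rw [Submodule.mkQ_apply, Submodule.Quotient.mk_eq_zero, hI]
    exact Submodule.mem_span_singleton_self _
  let Fq : (𝔏 ⧸ I) →ₗ[ℂ] (𝔏' ⧸ I') := Submodule.liftQ (I : Submodule ℂ 𝔏) fbar hkerf
  let Gq : (𝔏' ⧸ I') →ₗ[ℂ] (𝔏 ⧸ I) := Submodule.liftQ (I' : Submodule ℂ 𝔏') gbar hkerg
  have Fq_mk : ∀ x : 𝔏, Fq (LieSubmodule.Quotient.mk (N := I) x) =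
      LieSubmodule.Quotient.mk (N := I') (φ x) := fun x => rfl
  have Gq_mk : ∀ x : 𝔏', Gq (LieSubmodule.Quotient.mk (N := I') x) =
      LieSubmodule.Quotient.mk (N := I) (ψ x) := fun x => rfl
  have hGF : ∀ z : 𝔏 ⧸ I, Gq (Fq z) = z := by
    intro z
    obtain ⟨x, rfl⟩ := Submodule.Quotient.mk_surjective (I : Submodule ℂ 𝔏) z
    show Gq (Fq (LieSubmodule.Quotient.mk (N := I) x)) = LieSubmodule.Quotient.mk (N := I) x
    rw [Fq_mk, Gq_mk, hψφ]
  have hFG : ∀ z : 𝔏' ⧸ I', Fq (Gq z) = z := by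
    intro z
    obtain ⟨x, rfl⟩ := Submodule.Quotient.mk_surjective (I' : Submodule ℂ 𝔏') z
    show Fq (Gq (LieSubmodule.Quotient.mk (N := I') x)) = LieSubmodule.Quotient.mk (N := I') x
    rw [Gq_mk, Fq_mk, hφψ]
  have hFlie : ∀ x y : 𝔏 ⧸ I, Fq ⁅x, y⁆ = ⁅Fq x, Fq y⁆ := by
    intro x y
    obtain ⟨a, rfl⟩ := LieSubmodule.Quotient.surjective_mk' I x
    obtain ⟨b, rfl⟩ := LieSubmodule.Quotient.surjective_mk' I y
    show Fq ⁅LieSubmodule.Quotient.mk (N := I) a, LieSubmodule.Quotient.mk (N := I) b⁆ =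
      ⁅Fq (LieSubmodule.Quotient.mk (N := I) a), Fq (LieSubmodule.Quotient.mk (N := I) b)⁆
    have h1 : (⁅LieSubmodule.Quotient.mk (N := I) a, LieSubmodule.Quotient.mk (N := I) b⁆ : 𝔏 ⧸ I) =
        LieSubmodule.Quotient.mk (N := I) ⁅a, b⁆ :=
      (LieSubmodule.Quotient.mk_bracket I a b).symm
    rw [h1, Fq_mk, Fq_mk, Fq_mk]
    have h2 : (⁅LieSubmodule.Quotient.mk (N := I') (φ a),
        LieSubmodule.Quotient.mk (N := I') (φ b)⁆ : 𝔏' ⧸ I') =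
        LieSubmodule.Quotient.mk (N := I') ⁅φ a, φ b⁆ :=
      (LieSubmodule.Quotient.mk_bracket I' (φ a) (φ b)).symm
    rw [h2]
    exact ((Submodule.Quotient.eq (I' : Submodule ℂ 𝔏')).2 (key a b))
  let Flie : (𝔏 ⧸ I) →ₗ⁅ℂ⁆ (𝔏' ⧸ I') :=
    { Fq with map_lie' := fun {x y} => hFlie x y }
  let e : (𝔏 ⧸ I) ≃ₗ⁅ℂ⁆ (𝔏' ⧸ I') :=
    { Flie with
      invFun := Gq
      left_inv := hGF
      right_inv := hFG }
  have he : ∀ x : 𝔏 ⧸ I, e x = Fq x := fun x => rfl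
  refine ⟨e, ?_, ?_, ?_, ?_, ?_⟩
  · intro m
    rw [he, Fq_mk, φL]
  · intro m
    rw [he, Fq_mk, φJ]
  · intro m
    rw [he, Fq_mk, φG]
  · rw [he, Fq_mk, φC1]
  · rw [he, Fq_mk, φC2]
end
end

section
/- Assume α + n + mβ ≠ 0 for all m ∈ ℤ and all n ∈ ℤ with n ≠ 0. Let S be a simple module over the extended Heisenberg–Virasoro algebra 𝔏 = 𝔏_{α,β,F}, and suppose there exists k ∈ ℤ_{≥0} such that G_i, J_i, L_i act locally finitely on S for all i ≥ k. Then there exist k', l', m' ∈ ℤ_{≥0} and a nonzero vector v ∈ S such that G_{k'+i} v = J_{l'+i} v = L_{m'+i} v = 0 for all i ∈ ℤ_{≥0}. -/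
noncomputable section

open scoped BigOperators

namespace EHVaux

open Submodule

variable {S : Type} [AddCommGroup S] [Module ℂ S]

/-- Local finiteness of an operator. -/
def LocFin (x : Module.End ℂ S) : Prop :=
  ∀ w : S, FiniteDimensional ℂ ↥(Submodule.span ℂ (Set.range fun n : ℕ => (x ^ n) w))

lemma apply_span {s : Set S} {Z : Submodule ℂ S} (f : Module.End ℂ S)
    (h : ∀ x ∈ s, f x ∈ Z) {v : S} (hv : v ∈ Submodule.span ℂ s) : f v ∈ Z := by
  have : Submodule.span ℂ s ≤ Z.comap f := Submodule.span_le.mpr fun x hx => h x hx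
  exact this hv

lemma mem_span_of_subset {s t : Set S} (h : ∀ x ∈ s, x ∈ Submodule.span ℂ t) {v : S}
    (hv : v ∈ Submodule.span ℂ s) : v ∈ Submodule.span ℂ t :=
  (Submodule.span_le.mpr h) hv

lemma fd_finset_sup {ι : Type*} (s : Finset ι) (f : ι → Submodule ℂ S)
    (h : ∀ i ∈ s, FiniteDimensional ℂ ↥(f i)) : FiniteDimensional ℂ ↥(s.sup f) := by
  classical
  induction s using Finset.induction with
  | empty => rw [Finset.sup_empty]; exact (inferInstance : FiniteDimensional ℂ ↥(⊥ : Submodule ℂ S))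
  | @insert a t _ ih =>
      rw [Finset.sup_insert]
      haveI := h a (Finset.mem_insert_self a t)
      haveI := ih fun i hi => h i (Finset.mem_insert_of_mem hi)
      exact Submodule.finiteDimensional_sup _ _

/-- extract a finite spanning subset from a spanning set of a f.d. span -/
lemma exists_finset_span (A : Set S) (hfd : FiniteDimensional ℂ ↥(Submodule.span ℂ A)) :
    ∃ T : Finset S, ↑T ⊆ A ∧ Submodule.span ℂ A ≤ Submodule.span ℂ (T : Set S) := by
  classical
  haveI := hfd
  obtain ⟨s, hs⟩ : (Submodule.span ℂ A).FG := by
    rw [← Submodule.fg_top]; exact Module.finite_def.mp inferInstance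
  have hmem : ∀ y : S, y ∈ s → ∃ t : Finset S, ↑t ⊆ A ∧ y ∈ Submodule.span ℂ (t : Set S) := by
    intro y hy
    have : y ∈ Submodule.span ℂ A := by
      rw [← hs]; exact Submodule.subset_span hy
    exact Submodule.mem_span_finite_of_mem_span this
  choose t ht1 ht2 using hmem
  refine ⟨s.attach.biUnion (fun y => t y y.2), ?_, ?_⟩
  · intro x hx
    simp only [Finset.coe_biUnion, Set.mem_iUnion, Finset.mem_coe, Finset.mem_attach,
      Set.iUnion_true] at hx
    obtain ⟨y, hy⟩ := hx
    exact ht1 y y.2 hy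
  · rw [← hs]
    refine Submodule.span_le.mpr ?_
    intro y hy
    have hy' : y ∈ s := hy
    refine Submodule.span_mono ?_ (ht2 y hy')
    intro x hx
    simp only [Finset.coe_biUnion, Set.mem_iUnion]
    exact ⟨⟨y, hy'⟩, by simpa using hx⟩

/-- saturation of a submodule under an operator -/
def sat (x : Module.End ℂ S) (X : Submodule ℂ S) : Submodule ℂ S :=
  Submodule.span ℂ {v | ∃ (n : ℕ) (y : S), y ∈ X ∧ v = (x ^ n) y}

lemma le_sat (x : Module.End ℂ S) (X : Submodule ℂ S) : X ≤ sat x X := by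
  intro v hv
  exact Submodule.subset_span ⟨0, v, hv, by simp⟩

lemma sat_inv (x : Module.End ℂ S) (X : Submodule ℂ S) {v : S} (hv : v ∈ sat x X) :
    x v ∈ sat x X := by
  refine apply_span x ?_ hv
  rintro w ⟨n, y, hy, rfl⟩
  refine Submodule.subset_span ⟨n + 1, y, hy, ?_⟩
  rw [pow_succ']
  rfl

lemma sat_fd (x : Module.End ℂ S) (hx : LocFin x) (X : Submodule ℂ S)
    (hX : FiniteDimensional ℂ ↥X) : FiniteDimensional ℂ ↥(sat x X) := by
  classical
  haveI := hX
  obtain ⟨s, hs⟩ : X.FG := by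
    rw [← Submodule.fg_top]; exact Module.finite_def.mp inferInstance
  have hle : sat x X ≤ s.sup (fun y => Submodule.span ℂ (Set.range fun n : ℕ => (x ^ n) y)) := by
    refine Submodule.span_le.mpr ?_
    rintro v ⟨n, y, hy, rfl⟩
    rw [← hs] at hy
    refine apply_span (x ^ n) ?_ hy
    intro z hz
    have h1 : Submodule.span ℂ (Set.range fun n : ℕ => (x ^ n) z) ≤
        s.sup (fun y => Submodule.span ℂ (Set.range fun n : ℕ => (x ^ n) y)) :=
      Finset.le_sup (f := fun y => Submodule.span ℂ (Set.range fun n : ℕ => (x ^ n) y)) hz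
    exact h1 (Submodule.subset_span ⟨n, rfl⟩)
  haveI := fd_finset_sup s (fun y => Submodule.span ℂ (Set.range fun n : ℕ => (x ^ n) y))
    (fun y _ => hx y)
  exact Submodule.finiteDimensional_of_le hle

/-- Single-application tail lemma: all `Fo Q y`, `Q ≥ m+1`, lie in one f.d. subspace. -/
lemma tail_single (m : ℤ) (hm : 1 ≤ m)
    (Lm : Module.End ℂ S) (hLm : LocFin Lm)
    (Fo : ℤ → Module.End ℂ S)
    (step : ∀ b : ℤ, m + 1 ≤ b → ∃ c : ℂ, ∀ v : S,
        Fo (m + b) v = c • Lm (Fo b v) - c • Fo b (Lm v))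
    (y : S) :
    ∃ Z : Submodule ℂ S, FiniteDimensional ℂ ↥Z ∧ ∀ Q, m + 1 ≤ Q → Fo Q y ∈ Z := by
  classical
  set N : ℤ := m + 1 with hN
  set Xy : Submodule ℂ S := Submodule.span ℂ (Set.range fun t : ℕ => (Lm ^ t) y) with hXy
  have hXyfd : FiniteDimensional ℂ ↥Xy := hLm y
  have hXyinv : ∀ v ∈ Xy, Lm v ∈ Xy := by
    intro v hv
    refine apply_span Lm ?_ hv
    rintro w ⟨t, rfl⟩
    refine Submodule.subset_span ⟨t + 1, ?_⟩
    show (Lm ^ (t+1)) y = Lm ((Lm ^ t) y)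
    rw [pow_succ']
    rfl
  have hyXy : y ∈ Xy := Submodule.subset_span ⟨0, by simp⟩
  set W : Submodule ℂ S :=
    (Finset.range m.toNat).sup (fun j => Submodule.map (Fo (N + j)) Xy) with hW
  have hWfd : FiniteDimensional ℂ ↥W := by
    refine fd_finset_sup _ _ ?_
    intro j _
    exact inferInstance
  set Z : Submodule ℂ S := sat Lm (Xy ⊔ W) with hZ
  have hZfd : FiniteDimensional ℂ ↥Z := by
    refine sat_fd Lm hLm _ ?_
    exact Submodule.finiteDimensional_sup _ _
  have hZinv : ∀ v ∈ Z, Lm v ∈ Z := fun v hv => sat_inv Lm _ hv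
  have key : ∀ n : ℕ, ∀ x ∈ Xy, Fo (N + n) x ∈ Z := by
    intro n
    induction n using Nat.strong_induction_on with
    | _ n ih =>
      intro x hx
      by_cases hcase : n < m.toNat
      · -- base: window
        have h1 : Submodule.map (Fo (N + n)) Xy ≤ W :=
          Finset.le_sup (f := fun j => Submodule.map (Fo (N + (j : ℕ))) Xy)
            (Finset.mem_range.mpr hcase)
        have h2 : Fo (N + n) x ∈ Submodule.map (Fo (N + n)) Xy :=
          Submodule.mem_map_of_mem hx
        have h3 : Fo (N + n) x ∈ W := h1 h2
        have h4 : W ≤ Xy ⊔ W := le_sup_right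
        exact le_sat Lm _ (h4 h3)
      · -- step
        push_neg at hcase
        set n' : ℕ := n - m.toNat with hn'
        have hmn : (m.toNat : ℤ) = m := Int.toNat_of_nonneg (by omega)
        have hnn : (n : ℤ) = (n' : ℤ) + m := by
          have : n = n' + m.toNat := by omega
          rw [this]
          push_cast
          omega
        have hb : m + 1 ≤ N + n' := by omega
        obtain ⟨c, hc⟩ := step (N + n') hb
        have heq : N + (n : ℤ) = m + (N + n') := by omega
        have hn'lt : n' < n := by
          have hm1 : 1 ≤ m.toNat := by omega
          omega
        have t1 : Fo (N + n') x ∈ Z := ih n' hn'lt x hx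
        have t2 : Fo (N + n') (Lm x) ∈ Z := ih n' hn'lt (Lm x) (hXyinv x hx)
        rw [heq, hc x]
        exact Submodule.sub_mem _ (Submodule.smul_mem _ _ (hZinv _ t1))
          (Submodule.smul_mem _ _ t2)
  refine ⟨Z, hZfd, ?_⟩
  intro Q hQ
  have : Q = N + ((Q - N).toNat : ℤ) := by
    rw [Int.toNat_of_nonneg (by omega)]; omega
  rw [this]
  exact key _ y hyXy

/-- word operators -/
def wordOp (Fo : ℤ → Module.End ℂ S) : List ℤ → Module.End ℂ S
  | [] => 1
  | q :: w => Fo q * wordOp Fo w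

@[simp] lemma wordOp_nil (Fo : ℤ → Module.End ℂ S) : wordOp Fo [] = 1 := rfl

@[simp] lemma wordOp_cons (Fo : ℤ → Module.End ℂ S) (q : ℤ) (w : List ℤ) :
    wordOp Fo (q :: w) = Fo q * wordOp Fo w := rfl

lemma wordOp_cons_apply (Fo : ℤ → Module.End ℂ S) (q : ℤ) (w : List ℤ) (v : S) :
    wordOp Fo (q :: w) v = Fo q (wordOp Fo w v) := rfl

/-- The `L`-layer: a finite dimensional subspace containing `u`, invariant under all
`Lo R`, `R ≥ m+1`. -/
lemma Llayer (Lo : ℤ → Module.End ℂ S) (m : ℤ) (hm : 1 ≤ m)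
    (cLL : ∀ a b : ℤ, 1 ≤ a → 1 ≤ b →
      Lo a * Lo b - Lo b * Lo a = (((a : ℂ) - (b : ℂ))) • Lo (a + b))
    (hlfL : ∀ i, m ≤ i → LocFin (Lo i)) (u : S) :
    ∃ VL : Submodule ℂ S, FiniteDimensional ℂ ↥VL ∧ u ∈ VL ∧
      (∀ R, m + 1 ≤ R → ∀ v ∈ VL, Lo R v ∈ VL) := by
  classical
  set N : ℤ := m + 1 with hN
  have hN1 : 1 ≤ N := by omega
  -- pointwise swap identity
  have swap : ∀ a b : ℤ, 1 ≤ a → 1 ≤ b → ∀ v : S,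
      Lo a (Lo b v) = Lo b (Lo a v) + (((a : ℂ) - (b : ℂ))) • Lo (a + b) v := by
    intro a b ha hb v
    have h := congrFun (congrArg DFunLike.coe (cLL a b ha hb)) v
    simp only [LinearMap.sub_apply, LinearMap.smul_apply, Module.End.mul_apply] at h
    exact sub_eq_iff_eq_add'.mp h
  -- step hypothesis for tail_single
  have step : ∀ b : ℤ, m + 1 ≤ b → ∃ c : ℂ, ∀ v : S,
      Lo (m + b) v = c • Lo m (Lo b v) - c • Lo b (Lo m v) := by
    intro b hb
    have hcast : ((m : ℂ) - (b : ℂ)) ≠ 0 := by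
      intro h
      have h1 : (m : ℂ) = (b : ℂ) := sub_eq_zero.mp h
      have h2 : m = b := by exact_mod_cast h1
      omega
    refine ⟨((m : ℂ) - (b : ℂ))⁻¹, ?_⟩
    intro v
    have h := swap m b hm (by omega) v
    have h2 : (((m : ℂ) - (b : ℂ))) • Lo (m + b) v = Lo m (Lo b v) - Lo b (Lo m v) := by
      rw [h]; abel
    calc Lo (m + b) v = (((m : ℂ) - (b : ℂ))⁻¹) • ((((m : ℂ) - (b : ℂ))) • Lo (m + b) v) := by
          rw [inv_smul_smul₀ hcast]
      _ = (((m : ℂ) - (b : ℂ))⁻¹) • Lo m (Lo b v) - (((m : ℂ) - (b : ℂ))⁻¹) • Lo b (Lo m v) := by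
          rw [h2, smul_sub]
  obtain ⟨Z, hZfd, hZ⟩ := tail_single m hm (Lo m) (hlfL m le_rfl) Lo step u
  -- the span of single applications is finite dimensional
  set A₀ : Set S := {v | ∃ Q, N ≤ Q ∧ v = Lo Q u} with hA₀
  have hA₀fd : FiniteDimensional ℂ ↥(Submodule.span ℂ A₀) := by
    haveI := hZfd
    have hle : Submodule.span ℂ A₀ ≤ Z := by
      refine Submodule.span_le.mpr ?_
      rintro v ⟨Q, hQ, rfl⟩
      exact hZ Q hQ
    exact Submodule.finiteDimensional_of_le hle
  obtain ⟨T, hT1, hT2⟩ := exists_finset_span A₀ hA₀fd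
  have hTex : ∀ t : {x // x ∈ T}, ∃ Q, N ≤ Q ∧ (t : S) = Lo Q u := fun t => hT1 t.2
  choose Qf hQf1 hQf2 using hTex
  set Qs : Finset ℤ := T.attach.image Qf with hQs
  have hQsN : ∀ q ∈ Qs, N ≤ q := by
    intro q hq
    simp only [hQs, Finset.mem_image, Finset.mem_attach, true_and] at hq
    obtain ⟨t, rfl⟩ := hq
    exact hQf1 t
  have hQs1 : ∀ q ∈ Qs, (1 : ℤ) ≤ q := fun q hq => le_trans hN1 (hQsN q hq)
  have hSpanB : ∀ Q, N ≤ Q → Lo Q u ∈ Submodule.span ℂ {v | ∃ q ∈ Qs, v = Lo q u} := by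
    intro Q hQ
    have h1 : Lo Q u ∈ Submodule.span ℂ A₀ := Submodule.subset_span ⟨Q, hQ, rfl⟩
    have h2 := hT2 h1
    refine mem_span_of_subset ?_ h2
    intro x hx
    have hx' : x ∈ T := hx
    refine Submodule.subset_span ⟨Qf ⟨x, hx'⟩, ?_, hQf2 ⟨x, hx'⟩⟩
    simp [hQs]
  -- words over the alphabet Qs
  set QW : ℕ → Submodule ℂ S := fun t => Submodule.span ℂ
    {v | ∃ w : List ℤ, (∀ q ∈ w, q ∈ Qs) ∧ w.length ≤ t ∧ v = wordOp Lo w u} with hQW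
  have QWmono : ∀ {t t' : ℕ}, t ≤ t' → QW t ≤ QW t' := by
    intro t t' htt
    refine Submodule.span_mono ?_
    rintro v ⟨w, h1, h2, rfl⟩
    exact ⟨w, h1, le_trans h2 htt, rfl⟩
  have prepend : ∀ q ∈ Qs, ∀ t : ℕ, ∀ v ∈ QW t, Lo q v ∈ QW (t + 1) := by
    intro q hq t v hv
    refine apply_span (Lo q) ?_ hv
    rintro x ⟨w, h1, h2, rfl⟩
    refine Submodule.subset_span ⟨q :: w, ?_, by simpa using h2, rfl⟩
    intro p hp
    rcases List.mem_cons.mp hp with h | h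
    · exact h ▸ hq
    · exact h1 p h
  have C1 : ∀ (w : List ℤ), (∀ q ∈ w, q ∈ Qs) → ∀ R, N ≤ R →
      Lo R (wordOp Lo w u) ∈ QW (w.length + 1) := by
    intro w
    induction w with
    | nil =>
      intro _ R hR
      simp only [wordOp_nil, Module.End.one_apply, List.length_nil]
      refine mem_span_of_subset ?_ (hSpanB R hR)
      rintro x ⟨q, hq, rfl⟩
      exact Submodule.subset_span ⟨[q], by simpa using hq, by simp, rfl⟩
    | cons q w ih =>
      intro hqs R hR
      have hq : q ∈ Qs := hqs q List.mem_cons_self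
      have hw : ∀ p ∈ w, p ∈ Qs := fun p hp => hqs p (List.mem_cons_of_mem q hp)
      rw [wordOp_cons_apply]
      rw [swap R q (le_trans hN1 hR) (hQs1 q hq)]
      refine Submodule.add_mem _ ?_ (Submodule.smul_mem _ _ ?_)
      · have t1 := ih hw R hR
        have := prepend q hq _ _ t1
        simpa [List.length_cons] using this
      · have t2 := ih hw (R + q) (by have := hQsN q hq; omega)
        exact QWmono (by simp [List.length_cons]) t2
  have C1' : ∀ R, N ≤ R → ∀ t : ℕ, ∀ v ∈ QW t, Lo R v ∈ QW (t + 1) := by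
    intro R hR t v hv
    refine apply_span (Lo R) ?_ hv
    rintro x ⟨w, h1, h2, rfl⟩
    exact QWmono (by omega) (C1 w h1 R hR)
  -- the L-layer module
  set VL : Submodule ℂ S := Submodule.span ℂ
    {v | ∃ w : List ℤ, (∀ q ∈ w, N ≤ q) ∧ v = wordOp Lo w u} with hVL
  have huVL : u ∈ VL := Submodule.subset_span ⟨[], by simp, rfl⟩
  have hVLinv : ∀ R, N ≤ R → ∀ v ∈ VL, Lo R v ∈ VL := by
    intro R hR v hv
    refine apply_span (Lo R) ?_ hv
    rintro x ⟨w, h1, rfl⟩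
    refine Submodule.subset_span ⟨R :: w, ?_, rfl⟩
    intro p hp
    rcases List.mem_cons.mp hp with h | h
    · omega
    · exact h1 p h
  have C2 : ∀ (w : List ℤ), (∀ q ∈ w, N ≤ q) → wordOp Lo w u ∈ QW w.length := by
    intro w
    induction w with
    | nil => exact fun _ => Submodule.subset_span ⟨[], by simp, by simp, rfl⟩
    | cons R w ih =>
      intro hqs
      rw [wordOp_cons_apply]
      exact C1' R (hqs R List.mem_cons_self) _ _
        (ih fun p hp => hqs p (List.mem_cons_of_mem R hp))
  -- sorted words
  set SW : ℕ → Submodule ℂ S := fun t => Submodule.span ℂ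
    {v | ∃ w : List ℤ, (∀ q ∈ w, q ∈ Qs) ∧ List.Pairwise (fun a b => b ≤ a) w ∧
      w.length ≤ t ∧ v = wordOp Lo w u} with hSW
  set SWb : ℕ → ℤ → Submodule ℂ S := fun t M => Submodule.span ℂ
    {v | ∃ w : List ℤ, (∀ q ∈ w, q ∈ Qs) ∧ List.Pairwise (fun a b => b ≤ a) w ∧
      w.length ≤ t ∧ (∀ q ∈ w, q ≤ M) ∧ v = wordOp Lo w u} with hSWb
  have SWble : ∀ (t : ℕ) (M : ℤ), SWb t M ≤ SW t := by
    intro t M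
    refine Submodule.span_mono ?_
    rintro v ⟨w, h1, h2, h3, _, rfl⟩
    exact ⟨w, h1, h2, h3, rfl⟩
  have SWmono : ∀ {t t' : ℕ}, t ≤ t' → SW t ≤ SW t' := by
    intro t t' htt
    refine Submodule.span_mono ?_
    rintro v ⟨w, h1, h2, h3, rfl⟩
    exact ⟨w, h1, h2, le_trans h3 htt, rfl⟩
  set MQ : ℤ := if h : Qs.Nonempty then Qs.max' h else N with hMQ
  have hMQ' : ∀ q ∈ Qs, q ≤ MQ := by
    intro q hq
    rw [hMQ, dif_pos ⟨q, hq⟩]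
    exact Finset.le_max' _ q hq
  have QWSW : ∀ t : ℕ, ∀ v ∈ QW t, v ∈ SW t := by
    intro t
    induction t using Nat.strong_induction_on with
    | _ t H =>
      have Ins : ∀ (n : ℕ) (s : List ℤ), s.length ≤ n → s.length < t →
          (∀ q ∈ s, q ∈ Qs) → List.Pairwise (fun a b => b ≤ a) s →
          ∀ a ∈ Qs, ∀ M : ℤ, a ≤ M → (∀ e ∈ s, e ≤ M) →
          Lo a (wordOp Lo s u) ∈ SWb (s.length + 1) M ⊔ SW s.length := by
        intro n
        induction n with
        | zero =>
          intro s hs0 _ _ _ a ha M haM _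
          have : s = [] := List.length_eq_zero_iff.mp (by omega)
          subst this
          refine Submodule.mem_sup_left (Submodule.subset_span ?_)
          exact ⟨[a], by simpa using ha, by simp, by simp, by simpa using haM, rfl⟩
        | succ n ihn =>
          intro s hslen hslt hsqs hsort a ha M haM hsM
          cases s with
          | nil =>
            refine Submodule.mem_sup_left (Submodule.subset_span ?_)
            exact ⟨[a], by simpa using ha, by simp, by simp, by simpa using haM, rfl⟩
          | cons b s' =>
            have hb : b ∈ Qs := hsqs b List.mem_cons_self
            have hs'qs : ∀ q ∈ s', q ∈ Qs := fun q hq => hsqs q (List.mem_cons_of_mem b hq)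
            rw [List.pairwise_cons] at hsort
            have hhead : ∀ e ∈ s', e ≤ b := hsort.1
            have hsort' := hsort.2
            by_cases hab : b ≤ a
            · refine Submodule.mem_sup_left (Submodule.subset_span ?_)
              refine ⟨a :: b :: s', ?_, ?_, by simp [List.length_cons], ?_, rfl⟩
              · intro p hp
                rcases List.mem_cons.mp hp with h | h
                · exact h ▸ ha
                · exact hsqs p h
              · rw [List.pairwise_cons]
                constructor
                · intro e he
                  rcases List.mem_cons.mp he with h | h
                  · omega
                  · exact le_trans (hhead e h) hab
                · exact List.pairwise_cons.mpr ⟨hhead, hsort'⟩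
              · intro p hp
                rcases List.mem_cons.mp hp with h | h
                · omega
                · exact hsM p h
            · push_neg at hab
              rw [wordOp_cons_apply, swap a b (hQs1 a ha) (hQs1 b hb)]
              refine Submodule.add_mem _ ?_ (Submodule.smul_mem _ _ ?_)
              · -- Lo b (Lo a X')
                have P := ihn s' (by simp only [List.length_cons] at hslen; omega)
                  (by simp only [List.length_cons] at hslt; omega)
                  hs'qs hsort' a ha b (le_of_lt hab) hhead
                rcases Submodule.mem_sup.mp P with ⟨p₁, hp₁, p₂, hp₂, hP⟩
                rw [← hP, map_add]
                refine Submodule.add_mem _ ?_ ?_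
                · refine Submodule.mem_sup_left ?_
                  refine apply_span (Lo b) ?_ hp₁
                  rintro x ⟨w'', h1, h2, h3, h4, rfl⟩
                  refine Submodule.subset_span ⟨b :: w'', ?_, ?_, ?_, ?_, rfl⟩
                  · intro p hp
                    rcases List.mem_cons.mp hp with h | h
                    · exact h ▸ hb
                    · exact h1 p h
                  · exact List.Pairwise.cons h4 h2
                  · simp only [List.length_cons] at *
                    omega
                  · intro p hp
                    rcases List.mem_cons.mp hp with h | h
                    · exact h ▸ hsM b List.mem_cons_self
                    · exact le_trans (h4 p h) (hsM b List.mem_cons_self)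
                · refine Submodule.mem_sup_right ?_
                  refine apply_span (Lo b) ?_ hp₂
                  rintro x ⟨w'', h1, h2, h3, rfl⟩
                  have hI := ihn w'' (by simp only [List.length_cons] at hslen; omega)
                    (by simp only [List.length_cons] at hslt; omega)
                    h1 h2 b hb (max b MQ) (le_max_left _ _)
                    (fun e he => le_trans (hMQ' e (h1 e he)) (le_max_right _ _))
                  have hle : SWb (w''.length + 1) (max b MQ) ⊔ SW w''.length ≤
                      SW (b :: s').length := by
                    refine sup_le (le_trans (SWble _ _) (SWmono ?_)) (SWmono ?_) <;>
                      simp only [List.length_cons] <;> omega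
                  exact hle hI
              · -- correction term
                have hab' : N ≤ a + b := by
                  have := hQsN a ha; have := hQsN b hb; omega
                have t2 := C1 s' hs'qs (a + b) hab'
                have : (s'.length + 1) = (b :: s').length := by simp
                rw [this] at t2
                have hlt : (b :: s').length < t := hslt
                exact Submodule.mem_sup_right (H _ hlt _ t2)
      intro v hv
      refine mem_span_of_subset ?_ hv
      rintro x ⟨w, hwqs, hwlen, rfl⟩
      cases w with
      | nil => exact Submodule.subset_span ⟨[], by simp, by simp, by simp, rfl⟩
      | cons a w' =>
        have hw' : ∀ q ∈ w', q ∈ Qs := fun q hq => hwqs q (List.mem_cons_of_mem a hq)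
        have hX : wordOp Lo w' u ∈ QW w'.length :=
          Submodule.subset_span ⟨w', hw', le_rfl, rfl⟩
        have hlen' : w'.length < t := by
          simp only [List.length_cons] at hwlen; omega
        have hX' : wordOp Lo w' u ∈ SW w'.length := H _ hlen' _ hX
        rw [wordOp_cons_apply]
        refine apply_span (Lo a) ?_ hX'
        rintro x ⟨w'', h1, h2, h3, rfl⟩
        have hI := Ins w''.length w'' le_rfl (by omega) h1 h2 a
          (hwqs a List.mem_cons_self) (max a MQ) (le_max_left _ _)
          (fun e he => le_trans (hMQ' e (h1 e he)) (le_max_right _ _))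
        have hle : SWb (w''.length + 1) (max a MQ) ⊔ SW w''.length ≤ SW t := by
          refine sup_le (le_trans (SWble _ _) (SWmono ?_)) (SWmono ?_) <;> omega
        exact hle hI
  -- tower of saturations
  set dsc : List ℤ := (Qs.sort (· ≤ ·)).reverse with hdsc
  set tw : List ℤ → Submodule ℂ S :=
    fun d => d.foldr (fun q X => sat (Lo q) X) (Submodule.span ℂ {u}) with htw
  have htwfd : ∀ d : List ℤ, (∀ q ∈ d, q ∈ Qs) → FiniteDimensional ℂ ↥(tw d) := by
    intro d
    induction d with
    | nil =>
      intro _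
      exact FiniteDimensional.span_of_finite ℂ (Set.finite_singleton u)
    | cons q d' ih =>
      intro h
      have hq : m ≤ q := by have := hQsN q (h q List.mem_cons_self); omega
      exact sat_fd (Lo q) (hlfL q hq) _ (ih fun p hp => h p (List.mem_cons_of_mem q hp))
  have hbase : ∀ d : List ℤ, u ∈ tw d := by
    intro d
    induction d with
    | nil => exact Submodule.subset_span rfl
    | cons q d' ih => exact le_sat _ _ ih
  have hdscsort : List.Pairwise (fun a b => b < a) dsc := by
    rw [hdsc, List.pairwise_reverse]
    exact Qs.sortedLT_sort.pairwise
  have hdscmem : ∀ q ∈ Qs, q ∈ dsc := by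
    intro q hq
    rw [hdsc, List.mem_reverse, Finset.mem_sort]
    exact hq
  have SUB : ∀ d : List ℤ, List.Pairwise (fun a b => b < a) d → (∀ q ∈ d, q ∈ Qs) →
      ∀ w : List ℤ, List.Pairwise (fun a b => b ≤ a) w → (∀ q ∈ w, q ∈ d) →
      wordOp Lo w u ∈ tw d := by
    intro d
    induction d with
    | nil =>
      intro _ _ w _ hw
      cases w with
      | nil => simpa using hbase []
      | cons a w' => exact absurd (hw a List.mem_cons_self) List.not_mem_nil
    | cons qd d' ihd =>
      intro hdsort hdqs w
      induction w with
      | nil => intro _ _; exact hbase _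
      | cons a w' ihw =>
        intro hwsort hwd
        rw [List.pairwise_cons] at hwsort
        rw [List.pairwise_cons] at hdsort
        by_cases haq : a = qd
        · subst haq
          have hmem := ihw hwsort.2 (fun q hq => hwd q (List.mem_cons_of_mem a hq))
          exact sat_inv _ _ hmem
        · have had' : a ∈ d' := by
            rcases List.mem_cons.mp (hwd a List.mem_cons_self) with h | h
            · exact absurd h haq
            · exact h
          have hall : ∀ q ∈ a :: w', q ∈ d' := by
            intro q hq
            rcases List.mem_cons.mp hq with h | h
            · exact h ▸ had'
            · have hq1 : q ≤ a := hwsort.1 q h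
              rcases List.mem_cons.mp (hwd q (List.mem_cons_of_mem a h)) with h2 | h2
              · exfalso
                have : a < qd := hdsort.1 a had'
                omega
              · exact h2
          have := ihd hdsort.2 (fun q hq => hdqs q (List.mem_cons_of_mem qd hq))
            (a :: w') (List.pairwise_cons.mpr hwsort) hall
          exact le_sat _ _ this
  have hVLfd : FiniteDimensional ℂ ↥VL := by
    haveI := htwfd dsc (fun q hq => by
      rw [hdsc, List.mem_reverse, Finset.mem_sort] at hq; exact hq)
    have hle : VL ≤ tw dsc := by
      refine Submodule.span_le.mpr ?_
      rintro v ⟨w, h1, rfl⟩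
      have h2 : wordOp Lo w u ∈ SW w.length := QWSW _ _ (C2 w h1)
      have hsw : SW w.length ≤ tw dsc := by
        refine Submodule.span_le.mpr ?_
        rintro x ⟨w'', hq1, hq2, _, rfl⟩
        exact SUB dsc hdscsort (fun q hq => by
          rw [hdsc, List.mem_reverse, Finset.mem_sort] at hq; exact hq) w'' hq2
          (fun q hq => hdscmem q (hq1 q hq))
      exact hsw h2
    exact Submodule.finiteDimensional_of_le hle
  exact ⟨VL, hVLfd, huVL, hVLinv⟩

lemma wordOp_append (Fo : ℤ → Module.End ℂ S) (w w' : List ℤ) :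
    wordOp Fo (w ++ w') = wordOp Fo w * wordOp Fo w' := by
  induction w with
  | nil => simp
  | cons q w ih => simp [wordOp_cons, ih, mul_assoc]

lemma wordOp_comm (Fo : ℤ → Module.End ℂ S) (w : List ℤ) (g : Module.End ℂ S)
    (h : ∀ p ∈ w, Fo p * g = g * Fo p) : wordOp Fo w * g = g * wordOp Fo w := by
  induction w with
  | nil => simp
  | cons q w ih =>
    have h1 := h q List.mem_cons_self
    have h2 := ih fun p hp => h p (List.mem_cons_of_mem q hp)
    rw [wordOp_cons, mul_assoc, h2, ← mul_assoc, h1, mul_assoc]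

lemma mk_step (m : ℤ) (Lm : Module.End ℂ S) (Fo : ℤ → Module.End ℂ S) (co : ℤ → ℂ)
    (hco : ∀ b, m + 1 ≤ b → co b ≠ 0)
    (h : ∀ b, m + 1 ≤ b → Lm * Fo b - Fo b * Lm = co b • Fo (m + b)) :
    ∀ b, m + 1 ≤ b → ∃ c : ℂ, ∀ v : S,
      Fo (m + b) v = c • Lm (Fo b v) - c • Fo b (Lm v) := by
  intro b hb
  refine ⟨(co b)⁻¹, ?_⟩
  intro v
  have h1 := congrFun (congrArg DFunLike.coe (h b hb)) v
  simp only [LinearMap.sub_apply, LinearMap.smul_apply, Module.End.mul_apply] at h1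
  have h2 : co b • Fo (m + b) v = Lm (Fo b v) - Fo b (Lm v) := h1.symm
  calc Fo (m + b) v = (co b)⁻¹ • (co b • Fo (m + b) v) := by rw [inv_smul_smul₀ (hco b hb)]
    _ = (co b)⁻¹ • Lm (Fo b v) - (co b)⁻¹ • Fo b (Lm v) := by rw [h2, smul_sub]

/-- A layer for a commuting family `Fo` on top of a f.d. space `V0`. -/
lemma CommLayer (m : ℤ) (hm : 1 ≤ m) (Lm : Module.End ℂ S) (hLm : LocFin Lm)
    (Fo : ℤ → Module.End ℂ S)
    (stepF : ∀ b, m + 1 ≤ b → ∃ c : ℂ, ∀ v : S,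
      Fo (m + b) v = c • Lm (Fo b v) - c • Fo b (Lm v))
    (hlfF : ∀ i, m ≤ i → LocFin (Fo i))
    (hFF : ∀ a b : ℤ, 1 ≤ a → 1 ≤ b → Fo a * Fo b = Fo b * Fo a)
    (V0 : Submodule ℂ S) (hV0 : FiniteDimensional ℂ ↥V0) :
    ∃ V1 : Submodule ℂ S, FiniteDimensional ℂ ↥V1 ∧
      V1 = Submodule.span ℂ
        {v | ∃ (w : List ℤ) (y : S), (∀ q ∈ w, m + 1 ≤ q) ∧ y ∈ V0 ∧ v = wordOp Fo w y} := by
  classical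
  set N : ℤ := m + 1 with hN
  have hN1 : 1 ≤ N := by omega
  set V1 : Submodule ℂ S := Submodule.span ℂ
    {v | ∃ (w : List ℤ) (y : S), (∀ q ∈ w, N ≤ q) ∧ y ∈ V0 ∧ v = wordOp Fo w y} with hV1
  refine ⟨V1, ?_, rfl⟩
  -- single-application space is f.d.
  haveI := hV0
  obtain ⟨s0, hs0⟩ : V0.FG := by
    rw [← Submodule.fg_top]; exact Module.finite_def.mp inferInstance
  have hZex : ∀ z : {x // x ∈ s0}, ∃ Z : Submodule ℂ S,
      FiniteDimensional ℂ ↥Z ∧ ∀ Q, N ≤ Q → Fo Q (z : S) ∈ Z :=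
    fun z => tail_single m hm Lm hLm Fo stepF z
  choose Zf hZfd hZmem using hZex
  set BF : Set S := {v | ∃ (Q : ℤ) (y : S), N ≤ Q ∧ y ∈ V0 ∧ v = Fo Q y} with hBF
  have hBFfd : FiniteDimensional ℂ ↥(Submodule.span ℂ BF) := by
    have hle : Submodule.span ℂ BF ≤ s0.attach.sup Zf := by
      refine Submodule.span_le.mpr ?_
      rintro v ⟨Q, y, hQ, hy, rfl⟩
      rw [← hs0] at hy
      refine apply_span (Fo Q) ?_ hy
      intro z hz
      have h1 : Zf ⟨z, hz⟩ ≤ s0.attach.sup Zf :=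
        Finset.le_sup (Finset.mem_attach _ _)
      exact h1 (hZmem ⟨z, hz⟩ Q hQ)
    haveI := fd_finset_sup s0.attach Zf (fun z _ => hZfd z)
    exact Submodule.finiteDimensional_of_le hle
  obtain ⟨TF, hTF1, hTF2⟩ := exists_finset_span BF hBFfd
  have hTFex : ∀ t : {x // x ∈ TF}, ∃ (Q : ℤ) (y : S),
      N ≤ Q ∧ y ∈ V0 ∧ (t : S) = Fo Q y := fun t => hTF1 t.2
  choose Qc Yc hQc hYc hQYc using hTFex
  set QsF : Finset ℤ := TF.attach.image Qc with hQsF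
  have hQsFN : ∀ q ∈ QsF, N ≤ q := by
    intro q hq
    simp only [hQsF, Finset.mem_image, Finset.mem_attach, true_and] at hq
    obtain ⟨t, rfl⟩ := hq
    exact hQc t
  -- base finset
  set baseS : Finset S := s0 ∪ TF.attach.image Yc with hbaseS
  set AWF : Submodule ℂ S := Submodule.span ℂ
    {v | ∃ (w : List ℤ) (b : S), (∀ q ∈ w, q ∈ QsF) ∧ b ∈ baseS ∧ v = wordOp Fo w b}
    with hAWF
  have prependA : ∀ q ∈ QsF, ∀ v ∈ AWF, Fo q v ∈ AWF := by
    intro q hq v hv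
    refine apply_span (Fo q) ?_ hv
    rintro x ⟨w, b, h1, h2, rfl⟩
    refine Submodule.subset_span ⟨q :: w, b, ?_, h2, rfl⟩
    intro p hp
    rcases List.mem_cons.mp hp with h | h
    · exact h ▸ hq
    · exact h1 p h
  -- all tail words on V0 lie in AWF
  have Fwords : ∀ w : List ℤ, (∀ q ∈ w, N ≤ q) → ∀ y ∈ V0, wordOp Fo w y ∈ AWF := by
    intro w
    induction w using List.reverseRecOn with
    | nil =>
      intro _ y hy
      rw [← hs0] at hy
      refine mem_span_of_subset ?_ hy
      intro z hz
      refine Submodule.subset_span ⟨[], z, by simp, ?_, by simp⟩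
      rw [hbaseS]
      exact Finset.mem_union_left _ hz
    | append_singleton w p ih =>
      intro hqs y hy
      have hp : N ≤ p := hqs p (by simp)
      have hw : ∀ q ∈ w, N ≤ q := fun q hq => hqs q (by simp [hq])
      rw [wordOp_append]
      have h1 : Fo p y ∈ Submodule.span ℂ BF :=
        Submodule.subset_span ⟨p, y, hp, hy, rfl⟩
      have h2 := hTF2 h1
      have hmul : ∀ x ∈ (TF : Set S), (wordOp Fo w * wordOp Fo [p]) x ∈ AWF → True := fun _ _ _ => trivial
      -- (wordOp Fo w) applied to span TF
      have h3 : wordOp Fo w (Fo p y) ∈ AWF := by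
        have : (wordOp Fo w * wordOp Fo [p]) y = wordOp Fo w (Fo p y) := by
          simp [wordOp]
        refine apply_span (wordOp Fo w) ?_ h2
        intro t ht
        have ht' : t ∈ TF := ht
        have heq : t = Fo (Qc ⟨t, ht'⟩) (Yc ⟨t, ht'⟩) := hQYc ⟨t, ht'⟩
        rw [heq]
        have hcomm : wordOp Fo w * Fo (Qc ⟨t, ht'⟩) = Fo (Qc ⟨t, ht'⟩) * wordOp Fo w := by
          refine wordOp_comm Fo w _ ?_
          intro q hq
          exact hFF q (Qc ⟨t, ht'⟩) (by have := hw q hq; omega) (by have := hQc ⟨t, ht'⟩; omega)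
        have : wordOp Fo w (Fo (Qc ⟨t, ht'⟩) (Yc ⟨t, ht'⟩)) =
            Fo (Qc ⟨t, ht'⟩) (wordOp Fo w (Yc ⟨t, ht'⟩)) := by
          have := congrFun (congrArg DFunLike.coe hcomm) (Yc ⟨t, ht'⟩)
          simpa [Module.End.mul_apply] using this
        rw [this]
        refine prependA _ ?_ _ (ih hw _ (hYc ⟨t, ht'⟩))
        rw [hQsF]
        exact Finset.mem_image.mpr ⟨⟨t, ht'⟩, Finset.mem_attach _ _, rfl⟩
      have : wordOp Fo w (Fo p y) = (wordOp Fo w * wordOp Fo [p]) y := by simp [wordOp]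
      rw [this] at h3
      exact h3
  -- commuting tower bound
  set lQ : List ℤ := QsF.sort (· ≤ ·) with hlQ
  set tw : List ℤ → Submodule ℂ S :=
    fun d => d.foldr (fun q X => sat (Fo q) X) (Submodule.span ℂ (baseS : Set S)) with htw
  have htwfd : ∀ d : List ℤ, (∀ q ∈ d, q ∈ QsF) → FiniteDimensional ℂ ↥(tw d) := by
    intro d
    induction d with
    | nil =>
      intro _
      exact FiniteDimensional.span_of_finite ℂ (baseS.finite_toSet)
    | cons q d' ih =>
      intro h
      have hq : m ≤ q := by
        have := hQsFN q (h q List.mem_cons_self); omega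
      exact sat_fd (Fo q) (hlfF q hq) _ (ih fun p hp => h p (List.mem_cons_of_mem q hp))
  have hbasele : ∀ d : List ℤ, Submodule.span ℂ (baseS : Set S) ≤ tw d := by
    intro d
    induction d with
    | nil => exact le_rfl
    | cons q d' ih => exact le_trans ih (le_sat _ _)
  have hINV : ∀ d : List ℤ, (∀ p ∈ d, p ∈ QsF) → ∀ q ∈ d, ∀ v ∈ tw d, Fo q v ∈ tw d := by
    intro d
    induction d with
    | nil => intro _ q hq; exact absurd hq List.not_mem_nil
    | cons p d' ih =>
      intro hall q hq v hv
      rcases List.mem_cons.mp hq with h | h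
      · subst h
        exact sat_inv _ _ hv
      · -- q ∈ d'
        refine apply_span (Fo q) ?_ hv
        rintro x ⟨n, y, hy, rfl⟩
        have hcomm : Commute (Fo q) (Fo p) := by
          have h1 : (1:ℤ) ≤ q := by
            have := hQsFN q (hall q hq); omega
          have h2 : (1:ℤ) ≤ p := by
            have := hQsFN p (hall p List.mem_cons_self); omega
          exact (hFF q p h1 h2)
        have hpow := (hcomm.pow_right n).eq
        have : Fo q ((Fo p ^ n) y) = (Fo p ^ n) (Fo q y) := by
          have := congrFun (congrArg DFunLike.coe hpow) y
          simpa [Module.End.mul_apply] using this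
        rw [this]
        refine Submodule.subset_span ⟨n, Fo q y, ?_, rfl⟩
        exact ih (fun r hr => hall r (List.mem_cons_of_mem p hr)) q h y hy
  have hAWle : AWF ≤ tw lQ := by
    refine Submodule.span_le.mpr ?_
    rintro v ⟨w, b, h1, h2, rfl⟩
    induction w with
    | nil =>
      exact hbasele lQ (Submodule.subset_span h2)
    | cons q w' ih =>
      have hq : q ∈ QsF := h1 q List.mem_cons_self
      have hw' : ∀ p ∈ w', p ∈ QsF := fun p hp => h1 p (List.mem_cons_of_mem q hp)
      rw [wordOp_cons_apply]
      refine hINV lQ (fun p hp => by rwa [hlQ, Finset.mem_sort] at hp) q ?_ _ (ih hw')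
      rw [hlQ, Finset.mem_sort]
      exact hq
  have hV1le : V1 ≤ AWF := by
    refine Submodule.span_le.mpr ?_
    rintro v ⟨w, y, h1, h2, rfl⟩
    exact Fwords w h1 y h2
  haveI := htwfd lQ (fun q hq => by rwa [hlQ, Finset.mem_sort] at hq)
  exact Submodule.finiteDimensional_of_le (le_trans hV1le hAWle)

lemma swap_of {X Y Z : Module.End ℂ S} {c : ℂ} (h : X * Y - Y * X = c • Z) :
    ∀ v : S, X (Y v) = Y (X v) + c • Z v := by
  intro v
  have h1 := congrFun (congrArg DFunLike.coe h) v
  simp only [LinearMap.sub_apply, LinearMap.smul_apply, Module.End.mul_apply] at h1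
  exact sub_eq_iff_eq_add'.mp h1

/-- The full construction: a nonzero f.d. subspace invariant under all three tails. -/
lemma Vconstruct (Lo Jo Go : ℤ → Module.End ℂ S) (m : ℤ) (hm : 1 ≤ m) (F0 : ℂ)
    (cG : ℤ → ℤ → ℂ)
    (cLL : ∀ a b : ℤ, 1 ≤ a → 1 ≤ b →
      Lo a * Lo b - Lo b * Lo a = (((a : ℂ) - (b : ℂ))) • Lo (a + b))
    (cLJ : ∀ a b : ℤ, 1 ≤ a → 1 ≤ b → Lo a * Jo b - Jo b * Lo a = (-(b : ℂ)) • Jo (a + b))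
    (cLG : ∀ a b : ℤ, 1 ≤ a → 1 ≤ b → Lo a * Go b - Go b * Lo a = cG a b • Go (a + b))
    (cJJ : ∀ a b : ℤ, 1 ≤ a → 1 ≤ b → Jo a * Jo b = Jo b * Jo a)
    (cJG : ∀ a b : ℤ, 1 ≤ a → 1 ≤ b → Jo a * Go b - Go b * Jo a = F0 • Go (a + b))
    (cGG : ∀ a b : ℤ, 1 ≤ a → 1 ≤ b → Go a * Go b = Go b * Go a)
    (hcG : ∀ a b : ℤ, 1 ≤ a → 1 ≤ b → cG a b ≠ 0)
    (hlfL : ∀ i, m ≤ i → LocFin (Lo i)) (hlfJ : ∀ i, m ≤ i → LocFin (Jo i))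
    (hlfG : ∀ i, m ≤ i → LocFin (Go i)) (u : S) :
    ∃ V : Submodule ℂ S, FiniteDimensional ℂ ↥V ∧ u ∈ V ∧
      (∀ R, m + 1 ≤ R → ∀ v ∈ V, Lo R v ∈ V ∧ Jo R v ∈ V ∧ Go R v ∈ V) := by
  classical
  set N : ℤ := m + 1 with hN
  have hN1 : 1 ≤ N := by omega
  obtain ⟨VL, hVLfd, huVL, hVLinv⟩ := Llayer Lo m hm cLL hlfL u
  -- J layer
  have stepJ : ∀ b, m + 1 ≤ b → ∃ c : ℂ, ∀ v : S,
      Jo (m + b) v = c • Lo m (Jo b v) - c • Jo b (Lo m v) := by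
    refine mk_step m (Lo m) Jo (fun b => -(b : ℂ)) ?_ ?_
    · intro b hb
      simp only [ne_eq, neg_eq_zero, Int.cast_eq_zero]
      intro h
      rw [h] at hb
      omega
    · intro b hb
      exact cLJ m b hm (by omega)
  obtain ⟨VJ, hVJfd, hVJeq⟩ := CommLayer m hm (Lo m) (hlfL m le_rfl) Jo stepJ hlfJ cJJ VL hVLfd
  have hVLle : VL ≤ VJ := by
    intro y hy
    rw [hVJeq]
    exact Submodule.subset_span ⟨[], y, by simp, hy, by simp⟩
  have hVJprep : ∀ q, N ≤ q → ∀ v ∈ VJ, Jo q v ∈ VJ := by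
    intro q hq v hv
    rw [hVJeq] at hv ⊢
    refine apply_span (Jo q) ?_ hv
    rintro x ⟨w, y, h1, h2, rfl⟩
    refine Submodule.subset_span ⟨q :: w, y, ?_, h2, rfl⟩
    intro p hp
    rcases List.mem_cons.mp hp with h | h
    · omega
    · exact h1 p h
  have hVJLo : ∀ R, N ≤ R → ∀ v ∈ VJ, Lo R v ∈ VJ := by
    have claimJ : ∀ (w : List ℤ), (∀ q ∈ w, N ≤ q) → ∀ R, N ≤ R → ∀ y ∈ VL,
        Lo R (wordOp Jo w y) ∈ VJ := by
      intro w
      induction w with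
      | nil =>
        intro _ R hR y hy
        simpa using hVLle (hVLinv R hR y hy)
      | cons p w' ih =>
        intro hqs R hR y hy
        have hp : N ≤ p := hqs p List.mem_cons_self
        have hw' : ∀ q ∈ w', N ≤ q := fun q hq => hqs q (List.mem_cons_of_mem p hq)
        rw [wordOp_cons_apply,
          swap_of (cLJ R p (by omega) (by omega)) (wordOp Jo w' y)]
        refine Submodule.add_mem _ ?_ (Submodule.smul_mem _ _ ?_)
        · exact hVJprep p hp _ (ih hw' R hR y hy)
        · rw [hVJeq]
          refine Submodule.subset_span ⟨(R + p) :: w', y, ?_, hy, rfl⟩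
          intro q hq
          rcases List.mem_cons.mp hq with h | h
          · omega
          · exact hw' q h
    intro R hR v hv
    rw [hVJeq] at hv
    refine apply_span (Lo R) ?_ hv
    rintro x ⟨w, y, h1, h2, rfl⟩
    exact claimJ w h1 R hR y h2
  -- G layer
  have stepG : ∀ b, m + 1 ≤ b → ∃ c : ℂ, ∀ v : S,
      Go (m + b) v = c • Lo m (Go b v) - c • Go b (Lo m v) := by
    refine mk_step m (Lo m) Go (fun b => cG m b) ?_ ?_
    · intro b hb
      exact hcG m b hm (by omega)
    · intro b hb
      exact cLG m b hm (by omega)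
  obtain ⟨V, hVfd, hVeq⟩ := CommLayer m hm (Lo m) (hlfL m le_rfl) Go stepG hlfG cGG VJ hVJfd
  have hVJle : VJ ≤ V := by
    intro y hy
    rw [hVeq]
    exact Submodule.subset_span ⟨[], y, by simp, hy, by simp⟩
  have hVprep : ∀ q, N ≤ q → ∀ v ∈ V, Go q v ∈ V := by
    intro q hq v hv
    rw [hVeq] at hv ⊢
    refine apply_span (Go q) ?_ hv
    rintro x ⟨w, y, h1, h2, rfl⟩
    refine Submodule.subset_span ⟨q :: w, y, ?_, h2, rfl⟩
    intro p hp
    rcases List.mem_cons.mp hp with h | h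
    · omega
    · exact h1 p h
  have hVgen : ∀ (w : List ℤ), (∀ q ∈ w, N ≤ q) → ∀ y ∈ VJ, wordOp Go w y ∈ V := by
    intro w h1 y h2
    rw [hVeq]
    exact Submodule.subset_span ⟨w, y, h1, h2, rfl⟩
  have hVJo : ∀ R, N ≤ R → ∀ v ∈ V, Jo R v ∈ V := by
    have claimG : ∀ (w : List ℤ), (∀ q ∈ w, N ≤ q) → ∀ R, N ≤ R → ∀ y ∈ VJ,
        Jo R (wordOp Go w y) ∈ V := by
      intro w
      induction w with
      | nil =>
        intro _ R hR y hy
        simpa using hVJle (hVJprep R hR y hy)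
      | cons p w' ih =>
        intro hqs R hR y hy
        have hp : N ≤ p := hqs p List.mem_cons_self
        have hw' : ∀ q ∈ w', N ≤ q := fun q hq => hqs q (List.mem_cons_of_mem p hq)
        rw [wordOp_cons_apply,
          swap_of (cJG R p (by omega) (by omega)) (wordOp Go w' y)]
        refine Submodule.add_mem _ ?_ (Submodule.smul_mem _ _ ?_)
        · exact hVprep p hp _ (ih hw' R hR y hy)
        · refine hVgen ((R + p) :: w') ?_ y hy
          intro q hq
          rcases List.mem_cons.mp hq with h | h
          · omega
          · exact hw' q h
    intro R hR v hv
    rw [hVeq] at hv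
    refine apply_span (Jo R) ?_ hv
    rintro x ⟨w, y, h1, h2, rfl⟩
    exact claimG w h1 R hR y h2
  have hVLo : ∀ R, N ≤ R → ∀ v ∈ V, Lo R v ∈ V := by
    have claimG : ∀ (w : List ℤ), (∀ q ∈ w, N ≤ q) → ∀ R, N ≤ R → ∀ y ∈ VJ,
        Lo R (wordOp Go w y) ∈ V := by
      intro w
      induction w with
      | nil =>
        intro _ R hR y hy
        simpa using hVJle (hVJLo R hR y hy)
      | cons p w' ih =>
        intro hqs R hR y hy
        have hp : N ≤ p := hqs p List.mem_cons_self
        have hw' : ∀ q ∈ w', N ≤ q := fun q hq => hqs q (List.mem_cons_of_mem p hq)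
        rw [wordOp_cons_apply,
          swap_of (cLG R p (by omega) (by omega)) (wordOp Go w' y)]
        refine Submodule.add_mem _ ?_ (Submodule.smul_mem _ _ ?_)
        · exact hVprep p hp _ (ih hw' R hR y hy)
        · refine hVgen ((R + p) :: w') ?_ y hy
          intro q hq
          rcases List.mem_cons.mp hq with h | h
          · omega
          · exact hw' q h
    intro R hR v hv
    rw [hVeq] at hv
    refine apply_span (Lo R) ?_ hv
    rintro x ⟨w, y, h1, h2, rfl⟩
    exact claimG w h1 R hR y h2
  refine ⟨V, hVfd, hVJle (hVLle huVL), ?_⟩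
  intro R hR v hv
  exact ⟨hVLo R hR v hv, hVJo R hR v hv, hVprep R hR v hv⟩

lemma reduce (Lo : ℤ → Module.End ℂ S) (N : ℤ) (hN1 : 1 ≤ N)
    (cLL : ∀ a b : ℤ, 1 ≤ a → 1 ≤ b →
      Lo a * Lo b - Lo b * Lo a = (((a : ℂ) - (b : ℂ))) • Lo (a + b))
    (V : Submodule ℂ S)
    (hinvL : ∀ R, N ≤ R → ∀ v ∈ V, Lo R v ∈ V) :
    ∀ (n : ℕ) (s : Finset ℤ), s.card ≤ n → (∀ Q ∈ s, N ≤ Q) → ∀ g : ℤ → ℂ,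
      (∀ Q ∈ s, g Q ≠ 0) → s.Nonempty →
      (∀ v ∈ V, ∑ Q ∈ s, g Q • Lo Q v = 0) →
      ∃ d, N ≤ d ∧ ∀ v ∈ V, Lo d v = 0 := by
  classical
  intro n
  induction n with
  | zero =>
    intro s hcard _ _ _ hne _
    have := Finset.card_pos.mpr hne
    omega
  | succ n ih =>
    intro s hcard hsN g hg hne hrel
    by_cases h1 : s.card = 1
    · obtain ⟨d, hd⟩ := Finset.card_eq_one.mp h1
      subst hd
      refine ⟨d, hsN d (Finset.mem_singleton_self d), ?_⟩
      intro v hv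
      have := hrel v hv
      rw [Finset.sum_singleton] at this
      exact (smul_eq_zero.mp this).resolve_left (hg d (Finset.mem_singleton_self d))
    · have hcard2 : 2 ≤ s.card := by
        have := Finset.card_pos.mpr hne; omega
      set d := s.max' hne with hdd
      have hds : d ∈ s := s.max'_mem hne
      set s' := s.erase d with hs'
      have hs'card : s'.card = s.card - 1 := Finset.card_erase_of_mem hds
      have hs'ne : s'.Nonempty := Finset.card_pos.mp (by omega)
      set s2 := s'.image (fun Q => d + Q) with hs2
      set g2 : ℤ → ℂ := fun R => (((d : ℂ)) - (((R - d : ℤ) : ℂ))) * g (R - d) with hg2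
      have hinj : Set.InjOn (fun Q => d + Q) s' := fun a _ b _ h => by simpa using h
      have key : ∀ v ∈ V, ∑ R ∈ s2, g2 R • Lo R v = 0 := by
        intro v hv
        have E1 : ∑ Q ∈ s, g Q • Lo Q (Lo d v) = 0 := hrel _ (hinvL d (hsN d hds) v hv)
        have E2 : ∑ Q ∈ s, g Q • Lo d (Lo Q v) = 0 := by
          have h0 := congrArg (Lo d) (hrel v hv)
          rw [map_sum] at h0
          simp only [map_smul] at h0
          simpa using h0
        have E3 : ∑ Q ∈ s, g Q • ((((d : ℂ) - (Q : ℂ))) • Lo (d + Q) v) = 0 := by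
          have hQd : ∀ Q ∈ s, g Q • ((((d : ℂ) - (Q : ℂ))) • Lo (d + Q) v) =
              g Q • Lo d (Lo Q v) - g Q • Lo Q (Lo d v) := by
            intro Q hQ
            have hsw := swap_of (cLL d Q (by have := hsN d hds; omega)
              (by have := hsN Q hQ; omega)) v
            rw [← smul_sub]
            congr 1
            rw [hsw]
            abel
          rw [Finset.sum_congr rfl hQd, Finset.sum_sub_distrib, E1, E2, sub_zero]
        have E4 : ∑ Q ∈ s', g Q • ((((d : ℂ) - (Q : ℂ))) • Lo (d + Q) v) = 0 := by
          have hzero : g d • ((((d : ℂ) - (d : ℂ))) • Lo (d + d) v) = 0 := by simp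
          have := Finset.sum_erase_add s
            (fun Q => g Q • ((((d : ℂ) - (Q : ℂ))) • Lo (d + Q) v)) hds
          rw [← hs'] at this
          rw [← E3, ← this, hzero, add_zero]
        rw [hs2, Finset.sum_image (fun a ha b hb h => hinj ha hb h)]
        rw [← E4]
        refine Finset.sum_congr rfl ?_
        intro Q hQ
        rw [hg2]
        simp only [add_sub_cancel_left]
        rw [mul_smul]
        exact smul_comm _ _ _
      refine ih s2 ?_ ?_ g2 ?_ ?_ key
      · have : s2.card = s'.card := Finset.card_image_of_injOn hinj
        omega
      · intro R hR
        rw [hs2, Finset.mem_image] at hR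
        obtain ⟨Q, hQ, rfl⟩ := hR
        have h1 := hsN Q (Finset.mem_of_mem_erase hQ)
        have h2 := hsN d hds
        omega
      · intro R hR
        rw [hs2, Finset.mem_image] at hR
        obtain ⟨Q, hQ, rfl⟩ := hR
        rw [hg2]
        simp only [add_sub_cancel_left]
        refine mul_ne_zero ?_ (hg Q (Finset.mem_of_mem_erase hQ))
        have hQd : Q ≠ d := Finset.ne_of_mem_erase hQ
        intro h
        have : (d : ℂ) = (Q : ℂ) := by linear_combination h
        have : d = Q := by exact_mod_cast this
        omega
      · obtain ⟨Q, hQ⟩ := hs'ne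
        exact ⟨d + Q, Finset.mem_image_of_mem _ hQ⟩

lemma tailvanish (Lo Jo Go : ℤ → Module.End ℂ S) (m : ℤ) (hm : 1 ≤ m)
    (cG : ℤ → ℤ → ℂ)
    (cLL : ∀ a b : ℤ, 1 ≤ a → 1 ≤ b →
      Lo a * Lo b - Lo b * Lo a = (((a : ℂ) - (b : ℂ))) • Lo (a + b))
    (cLJ : ∀ a b : ℤ, 1 ≤ a → 1 ≤ b → Lo a * Jo b - Jo b * Lo a = (-(b : ℂ)) • Jo (a + b))
    (cLG : ∀ a b : ℤ, 1 ≤ a → 1 ≤ b → Lo a * Go b - Go b * Lo a = cG a b • Go (a + b))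
    (hcG : ∀ a b : ℤ, 1 ≤ a → 1 ≤ b → cG a b ≠ 0)
    (V : Submodule ℂ S) (hVfd : FiniteDimensional ℂ ↥V)
    (hinv : ∀ R, m + 1 ≤ R → ∀ v ∈ V, Lo R v ∈ V ∧ Jo R v ∈ V ∧ Go R v ∈ V) :
    ∃ T : ℤ, 2 * (m + 1) + 2 ≤ T ∧ ∀ R, T ≤ R → ∀ v ∈ V,
      Lo R v = 0 ∧ Jo R v = 0 ∧ Go R v = 0 := by
  classical
  set N : ℤ := m + 1 with hN
  have hN1 : 1 ≤ N := by omega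
  haveI := hVfd
  have hinvL : ∀ R, N ≤ R → ∀ v ∈ V, Lo R v ∈ V := fun R hR v hv => (hinv R hR v hv).1
  -- a nontrivial linear relation among restrictions of the Lo's
  set φ : ℕ → Module.End ℂ ↥V := fun n =>
    (Lo (N + n)).restrict (fun x hx => hinvL (N + n) (by omega) x hx) with hφ
  have hnl : ¬ LinearIndependent ℂ φ := Module.Finite.not_linearIndependent_of_infinite φ
  rw [not_linearIndependent_iff] at hnl
  obtain ⟨sn, gn, hsum, n0, hn0s, hn0⟩ := hnl
  have hrel0 : ∀ v ∈ V, ∑ n ∈ sn, gn n • Lo (N + n) v = 0 := by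
    intro v hv
    have h1 := congrFun (congrArg DFunLike.coe hsum) ⟨v, hv⟩
    have h2 : ((∑ n ∈ sn, gn n • φ n) ⟨v, hv⟩ : S) = 0 := by
      rw [h1]; rfl
    rw [LinearMap.sum_apply] at h2
    have h3 : ∀ n ∈ sn, ((gn n • φ n) (⟨v, hv⟩ : ↥V) : S) = gn n • Lo (N + n) v := by
      intro n _
      simp only [LinearMap.smul_apply, Submodule.coe_smul]
      congr 1
    rw [Submodule.coe_sum, Finset.sum_congr rfl h3] at h2
    exact h2
  -- transfer to a ℤ-indexed relation
  set s : Finset ℤ := Finset.image (fun n : ℕ => N + (n : ℤ)) sn with hs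
  set g : ℤ → ℂ := fun Q => gn (Q - N).toNat with hgdef
  have hinj : Set.InjOn (fun n : ℕ => N + (n : ℤ)) sn := fun a _ b _ h => by
    have : (a : ℤ) = b := by simpa using h
    exact_mod_cast this
  have hrel1 : ∀ v ∈ V, ∑ Q ∈ s, g Q • Lo Q v = 0 := by
    intro v hv
    rw [hs, Finset.sum_image (fun a ha b hb h => hinj ha hb h)]
    rw [← hrel0 v hv]
    refine Finset.sum_congr rfl ?_
    intro n _
    rw [hgdef]
    congr 2 <;> simp
  -- filter nonzero coefficients
  set sf := s.filter (fun Q => g Q ≠ 0) with hsf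
  have hsfne : sf.Nonempty := by
    refine ⟨N + n0, ?_⟩
    rw [hsf, Finset.mem_filter]
    constructor
    · rw [hs]; exact Finset.mem_image_of_mem _ hn0s
    · rw [hgdef]
      simpa using hn0
  have hrel2 : ∀ v ∈ V, ∑ Q ∈ sf, g Q • Lo Q v = 0 := by
    intro v hv
    rw [← hrel1 v hv, hsf]
    refine Finset.sum_filter_of_ne ?_
    intro Q _ h
    intro hgQ
    rw [hgQ] at h
    simp at h
  have hsfN : ∀ Q ∈ sf, N ≤ Q := by
    intro Q hQ
    rw [hsf, Finset.mem_filter, hs, Finset.mem_image] at hQ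
    obtain ⟨⟨n, _, rfl⟩, _⟩ := hQ
    omega
  obtain ⟨dL, hdLN, hdL⟩ := reduce Lo N hN1 cLL V hinvL sf.card sf le_rfl hsfN g
    (fun Q hQ => (Finset.mem_filter.mp hQ).2) hsfne hrel2
  -- upward propagation for Lo
  have hLtail : ∀ R, 2 * dL + 1 ≤ R → ∀ v ∈ V, Lo R v = 0 := by
    intro R hR v hv
    have hB : N ≤ R - dL := by omega
    have hsw := swap_of (cLL (R - dL) dL (by omega) (by omega)) v
    rw [hdL v hv, map_zero, hdL _ (hinvL _ hB v hv)] at hsw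
    have h2 : (((R - dL : ℤ) : ℂ) - (dL : ℂ)) • Lo (R - dL + dL) v = 0 := by
      simpa using hsw.symm
    have h3 : (((R - dL : ℤ) : ℂ) - (dL : ℂ)) ≠ 0 := by
      intro h
      have h4 : ((R - dL : ℤ) : ℂ) = ((dL : ℤ) : ℂ) := by linear_combination h
      have h5 : R - dL = dL := by exact_mod_cast h4
      omega
    have h6 := (smul_eq_zero.mp h2).resolve_left h3
    rw [sub_add_cancel] at h6
    exact h6
  refine ⟨max (2 * dL + 1 + N) (2 * N + 2), by omega, ?_⟩
  intro R hR v hv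
  have hRN : 2 * dL + 1 + N ≤ R := le_trans (le_max_left _ _) hR
  have hB : 2 * dL + 1 ≤ R - N := by omega
  have hBN : 1 ≤ R - N := by omega
  refine ⟨hLtail R (by omega) v hv, ?_, ?_⟩
  · have hsw := swap_of (cLJ (R - N) N (by omega) (by omega)) v
    rw [hLtail _ hB _ ((hinv N le_rfl v hv).2.1), hLtail _ hB v hv, map_zero] at hsw
    have h2 : (-(N : ℂ)) • Jo (R - N + N) v = 0 := by simpa using hsw.symm
    have h3 : (-(N : ℂ)) ≠ 0 := by
      simp only [ne_eq, neg_eq_zero, Int.cast_eq_zero]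
      omega
    have h6 := (smul_eq_zero.mp h2).resolve_left h3
    rwa [sub_add_cancel] at h6
  · have hsw := swap_of (cLG (R - N) N (by omega) (by omega)) v
    rw [hLtail _ hB _ ((hinv N le_rfl v hv).2.2), hLtail _ hB v hv, map_zero] at hsw
    have h2 : cG (R - N) N • Go (R - N + N) v = 0 := by simpa using hsw.symm
    have h6 := (smul_eq_zero.mp h2).resolve_left (hcG (R - N) N (by omega) (by omega))
    rwa [sub_add_cancel] at h6

lemma endgame (N T : ℤ) (hN1 : 1 ≤ N) (hNT : N ≤ T)
    (Op : Fin 3 → ℤ → Module.End ℂ S)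
    (V : Submodule ℂ S) (hVfd : FiniteDimensional ℂ ↥V) (hVne : V ≠ ⊥)
    (hinv : ∀ (f : Fin 3) (Q : ℤ), N ≤ Q → ∀ v ∈ V, Op f Q v ∈ V)
    (hvan : ∀ (f : Fin 3) (R : ℤ), T ≤ R → ∀ v ∈ V, Op f R v = 0)
    (bk : ∀ (f f' : Fin 3) (a b : ℤ), N ≤ a → N ≤ b → ∃ (c : ℂ) (f'' : Fin 3),
      (∀ v : S, Op f a (Op f' b v) = Op f' b (Op f a v) + c • Op f'' (a + b) v) ∧
      (c ≠ 0 → f'' = 0 → f = 0 ∧ f' = 0 ∧ a ≠ b))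
    (hexpr : ∀ (f : Fin 3) (A : ℤ), 2 * N ≤ A → (f = 0 → 2 * N + 1 ≤ A) →
      ∃ c : ℂ, c ≠ 0 ∧ ∀ v : S,
        c • Op f A v = Op 0 N (Op f (A - N) v) - Op f (A - N) (Op 0 N v)) :
    ∃ v : S, v ≠ 0 ∧ ∀ (f : Fin 3) (R : ℤ), 2 * N + 1 ≤ R → Op f R v = 0 := by
  classical
  haveI := hVfd
  set Good : ℤ → Prop := fun A =>
    ∃ (W : Submodule ℂ S) (χ : Fin 3 → ℤ → ℂ), W ≤ V ∧ W ≠ ⊥ ∧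
      (∀ (f : Fin 3) (Q : ℤ), N ≤ Q → ∀ w ∈ W, Op f Q w ∈ W) ∧
      (∀ (f : Fin 3) (Q : ℤ), A ≤ Q → ∀ w ∈ W, Op f Q w = χ f Q • w) ∧
      (∀ (f : Fin 3) (Q : ℤ), A ≤ Q →
        (2 * N ≤ Q ∧ (f = 0 → 2 * N + 1 ≤ Q)) → χ f Q = 0) with hGood
  have base : Good T := by
    refine ⟨V, fun _ _ => 0, le_rfl, hVne, hinv, ?_, ?_⟩
    · intro f Q hQ w hw
      rw [hvan f Q hQ w hw, zero_smul]
    · intro _ _ _ _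
      rfl
  have step : ∀ A : ℤ, N ≤ A → Good (A + 1) → Good A := by
    intro A hA hGA
    obtain ⟨W, χ, hWV, hWne, hWinv, hWsc, hWz⟩ := hGA
    -- a single eigen-cut
    have cut : ∀ (W' : Submodule ℂ S), W' ≤ W → W' ≠ ⊥ →
        (∀ (f : Fin 3) (Q : ℤ), N ≤ Q → ∀ w ∈ W', Op f Q w ∈ W') →
        ∀ f₀ : Fin 3, ∃ (μ : ℂ) (W'' : Submodule ℂ S), W'' ≤ W' ∧ W'' ≠ ⊥ ∧
          (∀ w ∈ W'', Op f₀ A w = μ • w) ∧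
          (∀ (f : Fin 3) (Q : ℤ), N ≤ Q → ∀ w ∈ W'', Op f Q w ∈ W'') := by
      intro W' hW'W hW'ne hW'inv f₀
      haveI : FiniteDimensional ℂ ↥W' :=
        Submodule.finiteDimensional_of_le (le_trans hW'W hWV)
      haveI : Nontrivial ↥W' := Submodule.nontrivial_iff_ne_bot.mpr hW'ne
      set E : Module.End ℂ ↥W' :=
        (Op f₀ A).restrict (fun x hx => hW'inv f₀ A hA x hx) with hE
      obtain ⟨μ, hμ⟩ := Module.End.exists_eigenvalue E
      obtain ⟨v₀, hv₀⟩ := hμ.exists_hasEigenvector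
      set W'' : Submodule ℂ S :=
        W' ⊓ LinearMap.ker (Op f₀ A - μ • (1 : Module.End ℂ S)) with hW''
      have hmem : ∀ w : S, w ∈ W'' ↔ w ∈ W' ∧ Op f₀ A w = μ • w := by
        intro w
        rw [hW'', Submodule.mem_inf, LinearMap.mem_ker]
        constructor
        · rintro ⟨h1, h2⟩
          refine ⟨h1, ?_⟩
          simp only [LinearMap.sub_apply, LinearMap.smul_apply, Module.End.one_apply] at h2
          exact sub_eq_zero.mp h2
        · rintro ⟨h1, h2⟩
          refine ⟨h1, ?_⟩
          simp only [LinearMap.sub_apply, LinearMap.smul_apply, Module.End.one_apply, h2, sub_self]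
      refine ⟨μ, W'', inf_le_left, ?_, ?_, ?_⟩
      · rw [Submodule.ne_bot_iff]
        refine ⟨(v₀ : S), ?_, ?_⟩
        · rw [hmem]
          refine ⟨v₀.2, ?_⟩
          have h1 := hv₀.apply_eq_smul
          have h2 : ((E v₀ : ↥W') : S) = Op f₀ A (v₀ : S) := by
            rw [hE]
            exact LinearMap.restrict_coe_apply _ _ _
          rw [h1] at h2
          rw [← h2]
          rfl
        · intro h
          exact hv₀.2 (Subtype.ext h)
      · intro w hw
        exact ((hmem w).mp hw).2
      · intro f Q hQ w hw
        rw [hmem] at hw ⊢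
        obtain ⟨hw1, hw2⟩ := hw
        refine ⟨hW'inv f Q hQ w hw1, ?_⟩
        obtain ⟨c', f'', hcomm, hguar⟩ := bk f₀ f A Q hA hQ
        have hsc2 : Op f'' (A + Q) w = χ f'' (A + Q) • w :=
          hWsc f'' (A + Q) (by omega) w (hW'W hw1)
        have hzero : c' • (χ f'' (A + Q) • w) = 0 := by
          by_cases hc' : c' = 0
          · rw [hc', zero_smul]
          · have hχ : χ f'' (A + Q) = 0 := by
              refine hWz f'' (A + Q) (by omega) ⟨by omega, ?_⟩
              intro hf''
              obtain ⟨hf, hf', hAQ⟩ := hguar hc' hf''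
              omega
            rw [hχ, zero_smul, smul_zero]
        rw [hcomm w, hw2, hsc2, hzero, add_zero, map_smul]
    -- three successive cuts
    obtain ⟨μ0, W1, hW1le, hW1ne, hW1sc, hW1inv⟩ := cut W le_rfl hWne hWinv 0
    obtain ⟨μ1, W2, hW2le, hW2ne, hW2sc, hW2inv⟩ := cut W1 hW1le hW1ne hW1inv 1
    obtain ⟨μ2, W3, hW3le, hW3ne, hW3sc, hW3inv⟩ := cut W2 (le_trans hW2le hW1le) hW2ne hW2inv 2
    have hW3W : W3 ≤ W := le_trans hW3le (le_trans hW2le hW1le)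
    have hW3V : W3 ≤ V := le_trans hW3W hWV
    haveI : FiniteDimensional ℂ ↥W3 := Submodule.finiteDimensional_of_le hW3V
    haveI : Nontrivial ↥W3 := Submodule.nontrivial_iff_ne_bot.mpr hW3ne
    set μf : Fin 3 → ℂ := ![μ0, μ1, μ2] with hμf
    have scal3 : ∀ f : Fin 3, ∀ w ∈ W3, Op f A w = μf f • w := by
      intro f w hw
      fin_cases f
      · exact hW1sc w (le_trans hW3le hW2le hw)
      · exact hW2sc w (hW3le hw)
      · exact hW3sc w hw
    -- trace argument: the new scalars vanish at large indices
    have hz3 : ∀ f : Fin 3, (2 * N ≤ A ∧ (f = 0 → 2 * N + 1 ≤ A)) → μf f = 0 := by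
      intro f hok
      obtain ⟨c, hc0, hcv⟩ := hexpr f A hok.1 hok.2
      have hAN : N ≤ A - N := by omega
      set Xr : Module.End ℂ ↥W3 :=
        (Op 0 N).restrict (fun x hx => hW3inv 0 N le_rfl x hx) with hXr
      set Yr : Module.End ℂ ↥W3 :=
        (Op f (A - N)).restrict (fun x hx => hW3inv f (A - N) hAN x hx) with hYr
      set Zr : Module.End ℂ ↥W3 :=
        (Op f A).restrict (fun x hx => hW3inv f A hA x hx) with hZr
      have hZid : Zr = μf f • (1 : Module.End ℂ ↥W3) := by
        ext w
        show ((Zr w : ↥W3) : S) = (((μf f • (1 : Module.End ℂ ↥W3)) w : ↥W3) : S)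
        rw [LinearMap.restrict_coe_apply]
        rw [scal3 f (w : S) w.2]
        simp
      have htr : c • Zr = Xr * Yr - Yr * Xr := by
        ext w
        show (((c • Zr) w : ↥W3) : S) = (((Xr * Yr - Yr * Xr) w : ↥W3) : S)
        have h1 : (((c • Zr) w : ↥W3) : S) = c • Op f A (w : S) := by
          simp [hZr, LinearMap.restrict_coe_apply]
        have h2 : (((Xr * Yr - Yr * Xr) w : ↥W3) : S) =
            Op 0 N (Op f (A - N) (w : S)) - Op f (A - N) (Op 0 N (w : S)) := by
          simp [hXr, hYr, Module.End.mul_apply, LinearMap.restrict_coe_apply]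
        rw [h1, h2, hcv]
      have htrace := congrArg (LinearMap.trace ℂ ↥W3) htr
      rw [map_sub, LinearMap.trace_mul_comm, sub_self] at htrace
      rw [map_smul, hZid, map_smul, LinearMap.trace_one] at htrace
      have hrkpos : 0 < Module.finrank ℂ ↥W3 := Module.finrank_pos
      have hrk : ((Module.finrank ℂ ↥W3 : ℕ) : ℂ) ≠ 0 := Nat.cast_ne_zero.mpr (by omega)
      have : c * (μf f * (Module.finrank ℂ ↥W3 : ℂ)) = 0 := by
        simpa [smul_eq_mul, mul_assoc] using htrace
      rcases mul_eq_zero.mp this with h | h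
      · exact absurd h hc0
      rcases mul_eq_zero.mp h with h' | h'
      · exact h'
      · exact absurd h' hrk
    refine ⟨W3, fun f Q => if Q = A then μf f else χ f Q, hW3V, hW3ne, hW3inv, ?_, ?_⟩
    · intro f Q hQ w hw
      by_cases hQA : Q = A
      · subst hQA
        simp only [if_pos rfl]
        exact scal3 f w hw
      · simp only [hQA, if_false]
        exact hWsc f Q (by omega) w (hW3W hw)
    · intro f Q hQ hok
      by_cases hQA : Q = A
      · subst hQA
        simp only [if_pos rfl]
        exact hz3 f hok
      · simp only [hQA, if_false]
        exact hWz f Q (by omega) hok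
  -- downward iteration
  have iter : ∀ t : ℕ, N ≤ T - t → Good (T - t) := by
    intro t
    induction t with
    | zero => intro _; simpa using base
    | succ t ih =>
      intro ht
      have h1 : N ≤ T - t := by
        push_cast at ht ⊢
        omega
      have h2 := ih h1
      have h3 : T - ((t : ℕ) + 1 : ℕ) + 1 = T - t := by push_cast; ring
      refine step (T - ((t : ℕ) + 1 : ℕ)) ?_ ?_
      · push_cast at ht ⊢; omega
      · rw [h3]; exact h2
  have hfin := iter (T - N).toNat (by rw [Int.toNat_of_nonneg (by omega)]; omega)
  have heq : T - ((T - N).toNat : ℤ) = N := by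
    rw [Int.toNat_of_nonneg (by omega)]; omega
  rw [heq] at hfin
  obtain ⟨W, χ, hWV, hWne, hWinv, hWsc, hWz⟩ := hfin
  obtain ⟨v, hvW, hv0⟩ := Submodule.ne_bot_iff W |>.mp hWne
  refine ⟨v, hv0, ?_⟩
  intro f R hR
  have h1 := hWsc f R (by omega) v hvW
  have h2 := hWz f R (by omega) ⟨by omega, fun _ => by omega⟩
  rw [h1, h2, zero_smul]

lemma swap_rev {X Y Z : Module.End ℂ S} {c : ℂ} (h : X * Y - Y * X = c • Z) :
    Y * X - X * Y = (-c) • Z := by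
  rw [← neg_sub, h, neg_smul]

/-- The master lemma. -/
theorem master (Lo Jo Go : ℤ → Module.End ℂ S) (m : ℤ) (hm : 1 ≤ m) (F0 : ℂ)
    (cG : ℤ → ℤ → ℂ)
    (cLL : ∀ a b : ℤ, 1 ≤ a → 1 ≤ b →
      Lo a * Lo b - Lo b * Lo a = (((a : ℂ) - (b : ℂ))) • Lo (a + b))
    (cLJ : ∀ a b : ℤ, 1 ≤ a → 1 ≤ b → Lo a * Jo b - Jo b * Lo a = (-(b : ℂ)) • Jo (a + b))
    (cLG : ∀ a b : ℤ, 1 ≤ a → 1 ≤ b → Lo a * Go b - Go b * Lo a = cG a b • Go (a + b))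
    (cJJ : ∀ a b : ℤ, 1 ≤ a → 1 ≤ b → Jo a * Jo b = Jo b * Jo a)
    (cJG : ∀ a b : ℤ, 1 ≤ a → 1 ≤ b → Jo a * Go b - Go b * Jo a = F0 • Go (a + b))
    (cGG : ∀ a b : ℤ, 1 ≤ a → 1 ≤ b → Go a * Go b = Go b * Go a)
    (hcG : ∀ a b : ℤ, 1 ≤ a → 1 ≤ b → cG a b ≠ 0)
    (hlfL : ∀ i, m ≤ i → LocFin (Lo i)) (hlfJ : ∀ i, m ≤ i → LocFin (Jo i))
    (hlfG : ∀ i, m ≤ i → LocFin (Go i)) (u : S) (hu : u ≠ 0) :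
    ∃ T : ℤ, 1 ≤ T ∧ ∃ v : S, v ≠ 0 ∧ ∀ R, T ≤ R →
      Lo R v = 0 ∧ Jo R v = 0 ∧ Go R v = 0 := by
  classical
  set N : ℤ := m + 1 with hN
  have hN1 : 1 ≤ N := by omega
  obtain ⟨V, hVfd, huV, hVinv⟩ :=
    Vconstruct Lo Jo Go m hm F0 cG cLL cLJ cLG cJJ cJG cGG hcG hlfL hlfJ hlfG u
  have hVne : V ≠ ⊥ := by
    intro h
    rw [h, Submodule.mem_bot] at huV
    exact hu huV
  obtain ⟨T, hTge, hvan⟩ :=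
    tailvanish Lo Jo Go m hm cG cLL cLJ cLG hcG V hVfd hVinv
  set Op : Fin 3 → ℤ → Module.End ℂ S := ![Lo, Jo, Go] with hOp
  have hinv' : ∀ (f : Fin 3) (Q : ℤ), N ≤ Q → ∀ v ∈ V, Op f Q v ∈ V := by
    intro f Q hQ v hv
    fin_cases f
    · exact (hVinv Q hQ v hv).1
    · exact (hVinv Q hQ v hv).2.1
    · exact (hVinv Q hQ v hv).2.2
  have hvan' : ∀ (f : Fin 3) (R : ℤ), T ≤ R → ∀ v ∈ V, Op f R v = 0 := by
    intro f R hR v hv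
    fin_cases f
    · exact (hvan R hR v hv).1
    · exact (hvan R hR v hv).2.1
    · exact (hvan R hR v hv).2.2
  have bk : ∀ (f f' : Fin 3) (a b : ℤ), N ≤ a → N ≤ b → ∃ (c : ℂ) (f'' : Fin 3),
      (∀ v : S, Op f a (Op f' b v) = Op f' b (Op f a v) + c • Op f'' (a + b) v) ∧
      (c ≠ 0 → f'' = 0 → f = 0 ∧ f' = 0 ∧ a ≠ b) := by
    intro f f' a b ha hb
    have ha1 : 1 ≤ a := by omega
    have hb1 : 1 ≤ b := by omega
    fin_cases f <;> fin_cases f'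
    · refine ⟨((a : ℂ) - (b : ℂ)), 0, swap_of (cLL a b ha1 hb1), ?_⟩
      intro hc _
      refine ⟨rfl, rfl, ?_⟩
      intro hab
      exact hc (by rw [hab]; ring)
    · exact ⟨-(b : ℂ), 1, swap_of (cLJ a b ha1 hb1), fun _ h => absurd h (by decide)⟩
    · exact ⟨cG a b, 2, swap_of (cLG a b ha1 hb1), fun _ h => absurd h (by decide)⟩
    · refine ⟨(a : ℂ), 1, ?_, fun _ h => absurd h (by decide)⟩
      have h4 := swap_rev (cLJ b a hb1 ha1)
      rw [add_comm b a, neg_neg] at h4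
      exact swap_of h4
    · refine ⟨0, 1, ?_, fun _ h => absurd h (by decide)⟩
      intro v
      have h1 := congrFun (congrArg DFunLike.coe (cJJ a b ha1 hb1)) v
      simp only [Module.End.mul_apply] at h1
      rw [zero_smul, add_zero]
      exact h1
    · exact ⟨F0, 2, swap_of (cJG a b ha1 hb1), fun _ h => absurd h (by decide)⟩
    · refine ⟨-(cG b a), 2, ?_, fun _ h => absurd h (by decide)⟩
      have h4 := swap_rev (cLG b a hb1 ha1)
      rw [add_comm b a] at h4
      exact swap_of h4
    · refine ⟨-F0, 2, ?_, fun _ h => absurd h (by decide)⟩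
      have h4 := swap_rev (cJG b a hb1 ha1)
      rw [add_comm b a] at h4
      exact swap_of h4
    · refine ⟨0, 2, ?_, fun _ h => absurd h (by decide)⟩
      intro v
      have h1 := congrFun (congrArg DFunLike.coe (cGG a b ha1 hb1)) v
      simp only [Module.End.mul_apply] at h1
      rw [zero_smul, add_zero]
      exact h1
  have hexpr : ∀ (f : Fin 3) (A : ℤ), 2 * N ≤ A → (f = 0 → 2 * N + 1 ≤ A) →
      ∃ c : ℂ, c ≠ 0 ∧ ∀ v : S,
        c • Op f A v = Op 0 N (Op f (A - N) v) - Op f (A - N) (Op 0 N v) := by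
    intro f A h2N h2N1
    have hAN1 : 1 ≤ A - N := by omega
    fin_cases f
    · refine ⟨(N : ℂ) - ((A - N : ℤ) : ℂ), ?_, ?_⟩
      · intro h
        have h1 : ((N : ℤ) : ℂ) = ((A - N : ℤ) : ℂ) := by linear_combination h
        have h2 : N = A - N := by exact_mod_cast h1
        have := h2N1 rfl
        omega
      · intro v
        have h1 := cLL N (A - N) hN1 hAN1
        rw [show N + (A - N) = A by ring] at h1
        have h2 := congrFun (congrArg DFunLike.coe h1) v
        simp only [LinearMap.sub_apply, LinearMap.smul_apply, Module.End.mul_apply] at h2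
        exact h2.symm
    · refine ⟨-((A - N : ℤ) : ℂ), ?_, ?_⟩
      · simp only [ne_eq, neg_eq_zero, Int.cast_eq_zero]
        omega
      · intro v
        have h1 := cLJ N (A - N) hN1 hAN1
        rw [show N + (A - N) = A by ring] at h1
        have h2 := congrFun (congrArg DFunLike.coe h1) v
        simp only [LinearMap.sub_apply, LinearMap.smul_apply, Module.End.mul_apply] at h2
        exact h2.symm
    · refine ⟨cG N (A - N), hcG N (A - N) hN1 hAN1, ?_⟩
      intro v
      have h1 := cLG N (A - N) hN1 hAN1
      rw [show N + (A - N) = A by ring] at h1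
      have h2 := congrFun (congrArg DFunLike.coe h1) v
      simp only [LinearMap.sub_apply, LinearMap.smul_apply, Module.End.mul_apply] at h2
      exact h2.symm
  obtain ⟨v, hv0, hvz⟩ := endgame N T hN1 (by omega) Op V hVfd hVne hinv' hvan' bk hexpr
  refine ⟨2 * N + 1, by omega, v, hv0, ?_⟩
  intro R hR
  exact ⟨hvz 0 R hR, hvz 1 R hR, hvz 2 R hR⟩

end EHVaux

attribute [local instance 100] LieRing.ofAssociativeRing

open EHVaux in
/-- (1) ⇒ (5) of Theorem `eqchar`. Assume `α + n + mβ ≠ 0` for all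
`m ∈ ℤ` and all `n ∈ ℤ` with `n ≠ 0`. Let `S` be a simple module over the extended
Heisenberg–Virasoro algebra `𝔏 = 𝔏_{α,β,F}` and suppose there exists `k ∈ ℤ_{≥0}` such
that `G i, J i, L i` act locally finitely on `S` for all `i ≥ k`. Then there exist
`k', l', m' ∈ ℤ_{≥0}` and a nonzero `v ∈ S` such that
`G (k'+i) v = J (l'+i) v = L (m'+i) v = 0` for all `i ∈ ℤ_{≥0}`. -/
theorem ehv_locally_finite_implies_whittaker_vector {𝔏 : Type*} [LieRing 𝔏]
    [LieAlgebra ℂ 𝔏] (α β F : ℂ) (Lg Jg Gg : ℤ → 𝔏) (C1 C2 C3 : 𝔏)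
    (hEHV : IsExtHV α β F Lg Jg Gg C1 C2 C3)
    (hαβ : ∀ m n : ℤ, n ≠ 0 → α + (n : ℂ) + (m : ℂ) * β ≠ 0)
    (S : Type) [AddCommGroup S] [Module ℂ S] (ρ : 𝔏 →ₗ⁅ℂ⁆ Module.End ℂ S)
    -- `S` is a simple `𝔏`-module:
    (hSne : ∃ s : S, s ≠ 0)
    (hSsimple : ∀ N : Submodule ℂ S, (∀ (x : 𝔏) (s : S), s ∈ N → ρ x s ∈ N) →
      N = ⊥ ∨ N = ⊤)
    -- `G i, J i, L i` act locally finitely on `S` for all `i ≥ k`: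
    (k : ℕ)
    (hlf : ∀ i : ℤ, (k : ℤ) ≤ i → ∀ w : S,
      FiniteDimensional ℂ
        ↥(Submodule.span ℂ (Set.range fun n : ℕ => (ρ (Gg i) ^ n) w)) ∧
      FiniteDimensional ℂ
        ↥(Submodule.span ℂ (Set.range fun n : ℕ => (ρ (Jg i) ^ n) w)) ∧
      FiniteDimensional ℂ
        ↥(Submodule.span ℂ (Set.range fun n : ℕ => (ρ (Lg i) ^ n) w))) :
    ∃ (k' l' m' : ℕ) (v : S), v ≠ 0 ∧
      ∀ i : ℕ, ρ (Gg ((k' : ℤ) + i)) v = 0 ∧ ρ (Jg ((l' : ℤ) + i)) v = 0 ∧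
        ρ (Lg ((m' : ℤ) + i)) v = 0 := by
  classical
  obtain ⟨u, hu⟩ := hSne
  set Lo : ℤ → Module.End ℂ S := fun i => ρ (Lg i) with hLo
  set Jo : ℤ → Module.End ℂ S := fun i => ρ (Jg i) with hJo
  set Go : ℤ → Module.End ℂ S := fun i => ρ (Gg i) with hGo
  have hbr : ∀ x y : 𝔏, ρ ⁅x, y⁆ = ρ x * ρ y - ρ y * ρ x := by
    intro x y
    rw [LieHom.map_lie]
    exact Ring.lie_def _ _
  have cLL : ∀ a b : ℤ, 1 ≤ a → 1 ≤ b →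
      Lo a * Lo b - Lo b * Lo a = (((a : ℂ) - (b : ℂ))) • Lo (a + b) := by
    intro a b ha hb
    have h1 := hbr (Lg a) (Lg b)
    rw [hEHV.lie_LL a b, if_neg (by omega : ¬ a + b = 0), add_zero, map_smul] at h1
    exact h1.symm
  have cLJ : ∀ a b : ℤ, 1 ≤ a → 1 ≤ b →
      Lo a * Jo b - Jo b * Lo a = (-(b : ℂ)) • Jo (a + b) := by
    intro a b ha hb
    have h1 := hbr (Lg a) (Jg b)
    rw [hEHV.lie_LJ a b, if_neg (by omega : ¬ a + b = 0), sub_zero, map_smul] at h1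
    exact h1.symm
  have cJJ : ∀ a b : ℤ, 1 ≤ a → 1 ≤ b → Jo a * Jo b = Jo b * Jo a := by
    intro a b ha hb
    have h1 := hbr (Jg a) (Jg b)
    rw [hEHV.lie_JJ a b, if_neg (by omega : ¬ a + b = 0), map_zero] at h1
    have h2 := sub_eq_zero.mp h1.symm
    exact h2
  have cLG : ∀ a b : ℤ, 1 ≤ a → 1 ≤ b →
      Lo a * Go b - Go b * Lo a = (-(α + (b : ℂ) + (a : ℂ) * β)) • Go (a + b) := by
    intro a b ha hb
    have h1 := hbr (Lg a) (Gg b)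
    rw [hEHV.lie_LG a b, map_smul] at h1
    exact h1.symm
  have cJG : ∀ a b : ℤ, 1 ≤ a → 1 ≤ b →
      Jo a * Go b - Go b * Jo a = F • Go (a + b) := by
    intro a b ha hb
    have h1 := hbr (Jg a) (Gg b)
    rw [hEHV.lie_JG a b, map_smul] at h1
    exact h1.symm
  have cGG : ∀ a b : ℤ, 1 ≤ a → 1 ≤ b → Go a * Go b = Go b * Go a := by
    intro a b ha hb
    have h1 := hbr (Gg a) (Gg b)
    rw [hEHV.lie_GG a b, map_zero] at h1
    exact sub_eq_zero.mp h1.symm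
  have hcG : ∀ a b : ℤ, 1 ≤ a → 1 ≤ b → (-(α + (b : ℂ) + (a : ℂ) * β)) ≠ 0 := by
    intro a b ha hb
    simp only [ne_eq, neg_eq_zero]
    exact hαβ a b (by omega)
  set m : ℤ := max (k : ℤ) 1 with hmdef
  have hm : 1 ≤ m := le_max_right _ _
  have hmk : (k : ℤ) ≤ m := le_max_left _ _
  have hlfL : ∀ i, m ≤ i → LocFin (Lo i) := fun i hi w => (hlf i (by omega) w).2.2
  have hlfJ : ∀ i, m ≤ i → LocFin (Jo i) := fun i hi w => (hlf i (by omega) w).2.1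
  have hlfG : ∀ i, m ≤ i → LocFin (Go i) := fun i hi w => (hlf i (by omega) w).1
  obtain ⟨T, hT1, v, hv0, hvz⟩ := master Lo Jo Go m hm F
    (fun a b => -(α + (b : ℂ) + (a : ℂ) * β)) cLL cLJ cLG cJJ cJG cGG hcG
    hlfL hlfJ hlfG u hu
  refine ⟨T.toNat, T.toNat, T.toNat, v, hv0, ?_⟩
  intro i
  have hTi : T ≤ (T.toNat : ℤ) + i := by
    rw [Int.toNat_of_nonneg (by omega)]
    omega
  obtain ⟨hL, hJ, hG⟩ := hvz ((T.toNat : ℤ) + i) hTi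
  exact ⟨hG, hJ, hL⟩
end
end

section
/- Let S be a simple module over the extended Heisenberg–Virasoro algebra 𝔏 = 𝔏_{α,β,F}, and suppose there exist k, l, m ∈ ℤ_{≥0} and a nonzero vector v ∈ S such that G_{k+i} v = J_{l+i} v = L_{m+i} v = 0 for all i ∈ ℤ_{≥0}. Then S is a restricted 𝔏-module, i.e., for every w ∈ S there exists N ∈ ℕ such that L_n w = J_n w = G_n w = 0 for all n ≥ N. -/
noncomputable section

open scoped BigOperators

attribute [local instance 100] LieRing.ofAssociativeRing

/-- (5) ⇒ (6) of Theorem `eqchar`. Let `S` be a simple module over the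
extended Heisenberg–Virasoro algebra `𝔏 = 𝔏_{α,β,F}` and suppose there exist
`k, l, m ∈ ℤ_{≥0}` and a nonzero `v ∈ S` such that
`G (k+i) v = J (l+i) v = L (m+i) v = 0` for all `i ∈ ℤ_{≥0}`. Then `S` is a restricted
`𝔏`-module. -/
theorem ehv_whittaker_vector_implies_restricted {𝔏 : Type*} [LieRing 𝔏]
    [LieAlgebra ℂ 𝔏] (α β F : ℂ) (Lg Jg Gg : ℤ → 𝔏) (C1 C2 C3 : 𝔏)
    (hEHV : IsExtHV α β F Lg Jg Gg C1 C2 C3)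
    (S : Type) [AddCommGroup S] [Module ℂ S] (ρ : 𝔏 →ₗ⁅ℂ⁆ Module.End ℂ S)
    -- `S` is a simple `𝔏`-module:
    (hSne : ∃ s : S, s ≠ 0)
    (hSsimple : ∀ N : Submodule ℂ S, (∀ (x : 𝔏) (s : S), s ∈ N → ρ x s ∈ N) →
      N = ⊥ ∨ N = ⊤)
    (k l m : ℕ) (v : S) (hv : v ≠ 0)
    (hann : ∀ i : ℕ, ρ (Gg ((k : ℤ) + i)) v = 0 ∧ ρ (Jg ((l : ℤ) + i)) v = 0 ∧
      ρ (Lg ((m : ℤ) + i)) v = 0) :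
    ∀ w : S, ∃ N : ℕ, ∀ n : ℤ, (N : ℤ) ≤ n →
      ρ (Lg n) w = 0 ∧ ρ (Jg n) w = 0 ∧ ρ (Gg n) w = 0 := by
  classical
  -- The identity ρ x (ρ y w) = ρ y (ρ x w) + ρ ⁅x, y⁆ w.
  have key : ∀ (x y : 𝔏) (w : S), ρ x (ρ y w) = ρ y (ρ x w) + ρ ⁅x, y⁆ w := by
    intro x y w
    rw [ρ.map_lie, Ring.lie_def]
    simp only [LinearMap.sub_apply, Module.End.mul_apply]
    abel
  set P : S → Prop := fun w => ∃ N : ℕ, ∀ n : ℤ, (N : ℤ) ≤ n →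
      ρ (Lg n) w = 0 ∧ ρ (Jg n) w = 0 ∧ ρ (Gg n) w = 0 with hP
  have Wadd : ∀ w₁ w₂ : S, P w₁ → P w₂ → P (w₁ + w₂) := by
    rintro w₁ w₂ ⟨N₁, h₁⟩ ⟨N₂, h₂⟩
    refine ⟨N₁ + N₂, fun n hn => ?_⟩
    have hn₁ : (N₁ : ℤ) ≤ n := by push_cast at hn ⊢; omega
    have hn₂ : (N₂ : ℤ) ≤ n := by push_cast at hn ⊢; omega
    obtain ⟨a1, a2, a3⟩ := h₁ n hn₁
    obtain ⟨b1, b2, b3⟩ := h₂ n hn₂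
    refine ⟨?_, ?_, ?_⟩ <;> simp [map_add, a1, a2, a3, b1, b2, b3]
  have Wsmul : ∀ (c : ℂ) (w : S), P w → P (c • w) := by
    rintro c w ⟨N, h⟩
    refine ⟨N, fun n hn => ?_⟩
    obtain ⟨a1, a2, a3⟩ := h n hn
    refine ⟨?_, ?_, ?_⟩ <;> simp [map_smul, a1, a2, a3]
  have Wzero : P 0 := ⟨0, fun n _ => by simp⟩
  set W : Submodule ℂ S :=
    { carrier := {w | P w}
      add_mem' := fun h₁ h₂ => Wadd _ _ h₁ h₂
      zero_mem' := Wzero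
      smul_mem' := fun c w h => Wsmul c w h } with hW
  -- Each member of the family is one of the seven kinds of generators.
  have hforms : ∀ i : (Fin 3 × ℤ) ⊕ Fin 3,
      (∃ p : ℤ, ehvFam Lg Jg Gg C1 C2 C3 i = Lg p) ∨
      (∃ p : ℤ, ehvFam Lg Jg Gg C1 C2 C3 i = Jg p) ∨
      (∃ p : ℤ, ehvFam Lg Jg Gg C1 C2 C3 i = Gg p) ∨
      ehvFam Lg Jg Gg C1 C2 C3 i = C1 ∨
      ehvFam Lg Jg Gg C1 C2 C3 i = C2 ∨
      ehvFam Lg Jg Gg C1 C2 C3 i = C3 := by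
    rintro (⟨f, p⟩ | c)
    · fin_cases f
      · exact Or.inl ⟨p, rfl⟩
      · exact Or.inr (Or.inl ⟨p, rfl⟩)
      · exact Or.inr (Or.inr (Or.inl ⟨p, rfl⟩))
    · fin_cases c
      · exact Or.inr (Or.inr (Or.inr (Or.inl rfl)))
      · exact Or.inr (Or.inr (Or.inr (Or.inr (Or.inl rfl))))
      · exact Or.inr (Or.inr (Or.inr (Or.inr (Or.inr rfl))))
  -- Stability of P under the generators.
  have stab_gen : ∀ y ∈ Set.range (ehvFam Lg Jg Gg C1 C2 C3),
      ∀ w : S, P w → P (ρ y w) := by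
    rintro y ⟨i, rfl⟩ w ⟨N, hN⟩
    rcases hforms i with ⟨p, e⟩ | ⟨p, e⟩ | ⟨p, e⟩ | e | e | e <;> rw [e]
    · -- y = Lg p
      refine ⟨N + p.natAbs + 1, fun n hn => ?_⟩
      have hn1 : (N : ℤ) ≤ n := by omega
      have hn2 : (N : ℤ) ≤ n + p := by omega
      have hnp : ¬ (n + p = 0) := by omega
      refine ⟨?_, ?_, ?_⟩
      · rw [key (Lg n) (Lg p) w, hEHV.lie_LL, if_neg hnp]
        simp [(hN n hn1).1, (hN (n + p) hn2).1]
      · rw [key (Jg n) (Lg p) w, ← lie_skew (Jg n) (Lg p), hEHV.lie_LJ,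
          if_neg (show ¬ (p + n = 0) by omega)]
        simp [(hN n hn1).2.1, (hN (p + n) (by omega)).2.1]
      · rw [key (Gg n) (Lg p) w, ← lie_skew (Gg n) (Lg p), hEHV.lie_LG]
        simp [(hN n hn1).2.2, (hN (p + n) (by omega)).2.2]
    · -- y = Jg p
      refine ⟨N + p.natAbs + 1, fun n hn => ?_⟩
      have hn1 : (N : ℤ) ≤ n := by omega
      have hn2 : (N : ℤ) ≤ n + p := by omega
      have hnp : ¬ (n + p = 0) := by omega
      refine ⟨?_, ?_, ?_⟩
      · rw [key (Lg n) (Jg p) w, hEHV.lie_LJ, if_neg hnp]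
        simp [(hN n hn1).1, (hN (n + p) hn2).2.1]
      · rw [key (Jg n) (Jg p) w, hEHV.lie_JJ, if_neg hnp]
        simp [(hN n hn1).2.1]
      · rw [key (Gg n) (Jg p) w, ← lie_skew (Gg n) (Jg p), hEHV.lie_JG]
        simp [(hN n hn1).2.2, (hN (p + n) (by omega)).2.2]
    · -- y = Gg p
      refine ⟨N + p.natAbs + 1, fun n hn => ?_⟩
      have hn1 : (N : ℤ) ≤ n := by omega
      have hn2 : (N : ℤ) ≤ n + p := by omega
      refine ⟨?_, ?_, ?_⟩
      · rw [key (Lg n) (Gg p) w, hEHV.lie_LG]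
        simp [(hN n hn1).1, (hN (n + p) hn2).2.2]
      · rw [key (Jg n) (Gg p) w, hEHV.lie_JG]
        simp [(hN n hn1).2.1, (hN (n + p) hn2).2.2]
      · rw [key (Gg n) (Gg p) w, hEHV.lie_GG]
        simp [(hN n hn1).2.2]
    -- central cases
    all_goals {
      refine ⟨N, fun n hn => ?_⟩
      obtain ⟨a1, a2, a3⟩ := hN n hn
      refine ⟨?_, ?_, ?_⟩
      · rw [key (Lg n) _ w, ← lie_skew, a1]
        first
        | rw [hEHV.central_C1] | rw [hEHV.central_C2] | rw [hEHV.central_C3]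
        simp
      · rw [key (Jg n) _ w, ← lie_skew, a2]
        first
        | rw [hEHV.central_C1] | rw [hEHV.central_C2] | rw [hEHV.central_C3]
        simp
      · rw [key (Gg n) _ w, ← lie_skew, a3]
        first
        | rw [hEHV.central_C1] | rw [hEHV.central_C2] | rw [hEHV.central_C3]
        simp }
  -- Stability of W under all of 𝔏.
  have stab : ∀ (x : 𝔏) (s : S), s ∈ W → ρ x s ∈ W := by
    intro x s hs
    have hx : x ∈ Submodule.span ℂ (Set.range (ehvFam Lg Jg Gg C1 C2 C3)) := by
      rw [hEHV.basis_span]; trivial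
    induction hx using Submodule.span_induction with
    | mem y hy => exact stab_gen y hy s hs
    | zero =>
        have : ρ (0 : 𝔏) s = 0 := by simp
        rw [this]; exact Wzero
    | add y z _ _ hy hz =>
        have : ρ (y + z) s = ρ y s + ρ z s := by simp
        rw [this]; exact Wadd _ _ hy hz
    | smul c y _ hy =>
        have : ρ (c • y) s = c • (ρ y s) := by simp
        rw [this]; exact Wsmul c _ hy
  -- v ∈ W
  have hvW : v ∈ W := by
    refine ⟨k + l + m, fun n hn => ?_⟩
    have hnk : (k : ℤ) ≤ n := by push_cast at hn; omega
    have hnl : (l : ℤ) ≤ n := by push_cast at hn; omega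
    have hnm : (m : ℤ) ≤ n := by push_cast at hn; omega
    refine ⟨?_, ?_, ?_⟩
    · have := (hann (n - m).toNat).2.2
      rwa [show (m : ℤ) + ((n - m).toNat : ℤ) = n by omega] at this
    · have := (hann (n - l).toNat).2.1
      rwa [show (l : ℤ) + ((n - l).toNat : ℤ) = n by omega] at this
    · have := (hann (n - k).toNat).1
      rwa [show (k : ℤ) + ((n - k).toNat : ℤ) = n by omega] at this
  have hWtop : W = ⊤ := by
    rcases hSsimple W stab with hbot | htop
    · exact absurd (hbot ▸ hvW) (by simpa using hv)
    · exact htop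
  intro w
  have : w ∈ W := hWtop ▸ Submodule.mem_top
  exact this
end
end
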